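/- arXiv:2604.16660 — 3 statements merged into one kernel-verified Lean document; each statement's English description precedes it below -/
import Mathlib

section
/- Let i : ℕ → ℕ (indexed from 1) be an infinite sequence of vertices, and let C_AF(μ_i) ⊆ AF be the set of quivers Q for which the sequence n ↦ μ_{i_n} ∘ ⋯ ∘ μ_{i_1}(Q) converges in the space AF, with D_AF(μ_i) its complement. Then: (i) D_AF(μ_i) is dense in AF; (ii) if no vertex v ∈ ℕ appears infinitely many times in the sequence i, then C_AF(μ_i) is dense in AF; (iii) if only finitely many vertices v ∈ ℕ appear in the sequence i, then C_AF(μ_i) is not dense in AF. -/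
-- Mutation of a quiver at a vertex `x`.
open Classical in
noncomputable def mutateFun {X : Type*} (x : X) (Q : X → X → ℤ) : X → X → ℤ :=
  fun v w =>
    if v = x ∨ w = x then - Q v w
    else Q v w + Q v x * max (Q x w) 0 + max (- Q v x) 0 * Q x w

-- Restriction of a quiver to a set of vertices `V`.
open Classical in
noncomputable def restrictFun {X : Type*} (V : Set X) (Q : X → X → ℤ) : X → X → ℤ :=
  fun a b => if a ∈ V ∧ b ∈ V then Q a b else 0

-- Overfill of a quiver on a set of vertices `V`.
open Classical in
noncomputable def overfillFun {X : Type*} (V : Set X) (Q : X → X → ℤ) : X → X → ℤ :=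
  fun a b => if a ∈ V ∨ b ∈ V then Q a b else 0

/-- The set of arrow finite quivers on `X`: skew-symmetric integer matrices. -/
def AF (X : Type*) : Type _ := {Q : X → X → ℤ // ∀ a b, Q a b = - Q b a}

/-- The basic set `U_{Q,V}`. -/
def Uset {X : Type*} (Q : AF X) (V : Set X) : Set (AF X) :=
  {Q' | restrictFun V Q'.1 = restrictFun V Q.1}

/-- The basic set `W_{Q,V}`. -/
def Wset {X : Type*} (Q : AF X) (V : Set X) : Set (AF X) :=
  {Q' | overfillFun V Q'.1 = overfillFun V Q.1}

def UBasis (X : Type*) : Set (Set (AF X)) :=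
  {U | ∃ (Q : AF X) (V : Set X), V.Finite ∧ U = Uset Q V}

def WBasis (X : Type*) : Set (Set (AF X)) :=
  {U | ∃ (Q : AF X) (V : Set X), V.Finite ∧ U = Wset Q V}

/-- The weak topology on `AF X`, generated by the sets `U_{Q,V}` with `V` finite. -/
def weakTop (X : Type*) : TopologicalSpace (AF X) :=
  TopologicalSpace.generateFrom (UBasis X)

/-- The strong topology on `AF X`, generated by the sets `W_{Q,V}` with `V` finite. -/
def strongTop (X : Type*) : TopologicalSpace (AF X) :=
  TopologicalSpace.generateFrom (WBasis X)

/-- Locally finite quivers. -/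
def LFset (X : Type*) : Set (AF X) := {Q | ∀ x : X, {y : X | Q.1 x y ≠ 0}.Finite}

/-- Finite quivers: those with finite support. -/
def FinSet (X : Type*) : Set (AF X) := {Q | {x : X | ∃ y, Q.1 x y ≠ 0}.Finite}

/-- Mutation as a map `AF X → AF X`. -/
noncomputable def AF.mut {X : Type*} (x : X) (Q : AF X) : AF X :=
  ⟨mutateFun x Q.1, by
    intro a b
    have h := Q.2
    simp only [mutateFun]
    by_cases ha : a = x
    · rw [if_pos (Or.inl ha), if_pos (Or.inr ha), h a b]
    · by_cases hb : b = x
      · rw [if_pos (Or.inr hb), if_pos (Or.inl hb), h a b]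
      · rw [if_neg (fun hc => hc.elim ha hb), if_neg (fun hc => hc.elim hb ha),
          h b a, h b x, h x a]
        simp only [neg_neg]
        ring⟩

/-- `mutUpTo i Q n = μ_{i n} ∘ ⋯ ∘ μ_{i 1} (Q)` (the sequence `i` is indexed from 1). -/
noncomputable def mutUpTo {X : Type*} (i : ℕ → X) (Q : AF X) : ℕ → AF X
  | 0 => Q
  | n + 1 => AF.mut (i (n + 1)) (mutUpTo i Q n)

/-- The domain of convergence in `AF` of the infinite mutation sequence `μ_i`. -/
def CAF (i : ℕ → ℕ) : Set (AF ℕ) :=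
  {Q | ∃ L : AF ℕ,
    Filter.Tendsto (fun n => mutUpTo i Q n) Filter.atTop (@nhds _ (weakTop ℕ) L)}
section Infra

open Filter TopologicalSpace

variable {X : Type*}

lemma AF.ext1 {Q R : AF X} (h : Q.1 = R.1) : Q = R := Subtype.ext h

lemma AF.skew (Q : AF X) (a b : X) : Q.1 a b = - Q.1 b a := Q.2 a b

lemma AF.diag (Q : AF X) (a : X) : Q.1 a a = 0 := by
  have := Q.2 a a; omega

lemma mut_fst {x : X} {Q : AF X} : (AF.mut x Q).1 = mutateFun x Q.1 := rfl

lemma mutateFun_left (x : X) (Q : X → X → ℤ) (q : X) :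
    mutateFun x Q x q = - Q x q := by
  simp [mutateFun]

lemma mutateFun_right (x : X) (Q : X → X → ℤ) (p : X) :
    mutateFun x Q p x = - Q p x := by
  simp [mutateFun]

lemma mutateFun_ne (x : X) (Q : X → X → ℤ) {p q : X} (hp : p ≠ x) (hq : q ≠ x) :
    mutateFun x Q p q = Q p q + Q p x * max (Q x q) 0 + max (- Q p x) 0 * Q x q := by
  simp [mutateFun, hp, hq]

lemma corr_zero_left (β : ℤ) : (0:ℤ) * max β 0 + max (-(0:ℤ)) 0 * β = 0 := by simp

lemma corr_zero_right (α : ℤ) : α * max (0:ℤ) 0 + max (-α) 0 * (0:ℤ) = 0 := by simp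

lemma corr_neg_self (d : ℤ) : d * max (-d) 0 + max (-d) 0 * (-d) = 0 := by ring

lemma corr_self {d : ℤ} (hd : d = 1 ∨ d = -1) : d * max d 0 + max (-d) 0 * d = d := by
  rcases hd with h | h <;> subst h <;> norm_num

/-- mutation at a vertex with zero row is the identity -/
lemma mut_id_of_row_zero {x : X} {Q : AF X} (h : ∀ a, Q.1 x a = 0) : AF.mut x Q = Q := by
  apply AF.ext1; funext p q
  have hcol : ∀ a, Q.1 a x = 0 := fun a => by rw [Q.skew]; simp [h a]
  rw [mut_fst]
  by_cases hp : p = x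
  · subst hp; rw [mutateFun_left, h q, neg_zero]
  · by_cases hq : q = x
    · subst hq; rw [mutateFun_right, hcol p, neg_zero]
    · rw [mutateFun_ne _ _ hp hq, hcol p, h q]; simp

/-- mutation is an involution -/
lemma mut_mut (x : X) (Q : AF X) : AF.mut x (AF.mut x Q) = Q := by
  apply AF.ext1; funext p q
  rw [mut_fst, mut_fst]
  by_cases hp : p = x
  · subst hp; rw [mutateFun_left, mutateFun_left, neg_neg]
  · by_cases hq : q = x
    · subst hq; rw [mutateFun_right, mutateFun_right, neg_neg]
    · rw [mutateFun_ne _ _ hp hq, mutateFun_ne _ _ hp hq,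
        mutateFun_right, mutateFun_left]
      simp only [neg_neg]
      have h1 : max (Q.1 x q) 0 - max (-(Q.1 x q)) 0 = Q.1 x q :=
        max_zero_sub_max_neg_zero_eq_self _
      have h2 : max (Q.1 p x) 0 - max (-(Q.1 p x)) 0 = Q.1 p x :=
        max_zero_sub_max_neg_zero_eq_self _
      linear_combination (Q.1 p x) * h1 - (Q.1 x q) * h2

end Infra
section Topo

open Filter TopologicalSpace

variable {X : Type*}

lemma restrict_eq_on {V : Set X} {Q R : X → X → ℤ}
    (h : restrictFun V Q = restrictFun V R) {a b : X} (ha : a ∈ V) (hb : b ∈ V) :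
    Q a b = R a b := by
  have := congrFun (congrFun h a) b
  simpa [restrictFun, ha, hb] using this

lemma mem_Uset_self (Q : AF X) (V : Set X) : Q ∈ Uset Q V := rfl

lemma Uset_mono {Q : AF X} {V V' : Set X} (h : V ⊆ V') : Uset Q V' ⊆ Uset Q V := by
  intro Q' hQ'
  funext a b
  simp only [restrictFun]
  split_ifs with hab
  · exact restrict_eq_on hQ' (h hab.1) (h hab.2)
  · rfl

lemma Uset_eq_of_mem {Q Q' : AF X} {V : Set X} (h : Q' ∈ Uset Q V) :
    Uset Q' V = Uset Q V := by
  ext R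
  constructor <;> intro hR
  · exact (hR : restrictFun V R.1 = _).trans h
  · exact (hR : restrictFun V R.1 = _).trans h.symm

lemma isOpen_Uset (Q : AF X) {V : Set X} (hV : V.Finite) :
    @IsOpen _ (weakTop X) (Uset Q V) :=
  TopologicalSpace.GenerateOpen.basic _ ⟨Q, V, hV, rfl⟩

lemma exists_basic {O : Set (AF X)} (hO : @IsOpen _ (weakTop X) O) :
    ∀ x ∈ O, ∃ V : Set X, V.Finite ∧ Uset x V ⊆ O := by
  have hO' : TopologicalSpace.GenerateOpen (UBasis X) O := hO
  induction hO' with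
  | basic U hU =>
    rintro x hx
    obtain ⟨Q, V, hV, rfl⟩ := hU
    exact ⟨V, hV, le_of_eq (Uset_eq_of_mem hx)⟩
  | univ => exact fun x _ => ⟨∅, Set.finite_empty, fun _ _ => trivial⟩
  | inter U1 U2 h1 h2 ih1 ih2 =>
    intro x hx
    obtain ⟨V1, hV1, hs1⟩ := ih1 h1 x hx.1
    obtain ⟨V2, hV2, hs2⟩ := ih2 h2 x hx.2
    exact ⟨V1 ∪ V2, hV1.union hV2,
      Set.subset_inter ((Uset_mono Set.subset_union_left).trans hs1)
        ((Uset_mono Set.subset_union_right).trans hs2)⟩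
  | sUnion S hS ih =>
    intro x hx
    obtain ⟨t, htS, hxt⟩ := hx
    obtain ⟨V, hV, hsub⟩ := ih t htS (hS t htS) x hxt
    exact ⟨V, hV, hsub.trans (Set.subset_sUnion_of_mem htS)⟩

/-- if a sequence converges in the weak topology then each entry is eventually
the corresponding entry of the limit. -/
lemma entry_eventually {u : ℕ → AF X} {L : AF X}
    (h : Filter.Tendsto u Filter.atTop (@nhds _ (weakTop X) L)) (a b : X) :
    ∃ N, ∀ n, N ≤ n → (u n).1 a b = L.1 a b := by
  letI := weakTop X
  have hU : Uset L {a, b} ∈ nhds L :=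
    (isOpen_Uset L ((Set.finite_singleton b).insert a)).mem_nhds (mem_Uset_self L _)
  have hev := h.eventually_mem hU
  rw [Filter.eventually_atTop] at hev
  obtain ⟨N, hN⟩ := hev
  exact ⟨N, fun n hn => restrict_eq_on (hN n hn)
    (Set.mem_insert a {b}) (Set.mem_insert_of_mem a rfl)⟩

end Topo
section Structures

open Filter

variable {X : Type*}

lemma mutUpTo_succ (i : ℕ → X) (Q : AF X) (n : ℕ) :
    mutUpTo i Q (n + 1) = AF.mut (i (n + 1)) (mutUpTo i Q n) := rfl

noncomputable def restrictAF (V : Set X) (Q : AF X) : AF X :=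
  ⟨restrictFun V Q.1, by
    intro a b
    simp only [restrictFun]
    by_cases h : a ∈ V ∧ b ∈ V
    · rw [if_pos h, if_pos ⟨h.2, h.1⟩, Q.skew]
    · rw [if_neg h, if_neg (fun h' => h ⟨h'.2, h'.1⟩), neg_zero]⟩

/-- support contained in `V` -/
def SuppIn (V : Set X) (Q : AF X) : Prop := ∀ p q, Q.1 p q ≠ 0 → p ∈ V ∧ q ∈ V

lemma suppIn_restrictAF (V : Set X) (Q : AF X) : SuppIn V (restrictAF V Q) := by
  intro p q h
  by_contra hc
  exact h (if_neg (fun h' : p ∈ V ∧ q ∈ V => hc h'))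

lemma row_zero_of_suppIn {V : Set X} {Q : AF X} (hQ : SuppIn V Q) {x : X} (hx : x ∉ V) :
    ∀ a, Q.1 x a = 0 := by
  intro a; by_contra h; exact hx (hQ x a h).1

lemma mut_id_of_suppIn {V : Set X} {Q : AF X} (hQ : SuppIn V Q) {x : X} (hx : x ∉ V) :
    AF.mut x Q = Q :=
  mut_id_of_row_zero (row_zero_of_suppIn hQ hx)

lemma suppIn_mut {V : Set X} {Q : AF X} (hQ : SuppIn V Q) (x : X) :
    SuppIn V (AF.mut x Q) := by
  by_cases hx : x ∈ V
  · intro p q h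
    rw [mut_fst] at h
    by_cases hp : p = x
    · rw [hp] at h ⊢
      rw [mutateFun_left] at h
      exact ⟨hx, (hQ x q (by omega)).2⟩
    · by_cases hq : q = x
      · rw [hq] at h ⊢
        rw [mutateFun_right] at h
        exact ⟨(hQ p x (by omega)).1, hx⟩
      · rw [mutateFun_ne _ _ hp hq] at h
        by_cases hα : Q.1 p x = 0
        · simp only [hα, neg_zero, zero_mul, add_zero, max_self, zero_add] at h
          exact hQ p q h
        · by_cases hβ : Q.1 x q = 0
          · simp only [hβ, mul_zero, add_zero, max_self] at h
            exact hQ p q h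
          · exact ⟨(hQ p x hα).1, (hQ x q hβ).2⟩
  · rw [mut_id_of_suppIn hQ hx]; exact hQ

lemma suppIn_mutUpTo {V : Set X} {Q : AF X} (hQ : SuppIn V Q) (i : ℕ → X) (n : ℕ) :
    SuppIn V (mutUpTo i Q n) := by
  induction n with
  | zero => exact hQ
  | succ n ih => exact suppIn_mut ih _

end Structures
section Glue

open Filter

lemma mem_CAF_of_eventually_const {i : ℕ → ℕ} {Q : AF ℕ} {N : ℕ}
    (h : ∀ n, N ≤ n → mutUpTo i Q n = mutUpTo i Q N) : Q ∈ CAF i :=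
  ⟨mutUpTo i Q N,
    (by letI := weakTop ℕ; exact tendsto_atTop_of_eventually_const (fun n (hn : N ≤ n) => h n hn))⟩

lemma not_mem_CAF_of_flip {i : ℕ → ℕ} {Q : AF ℕ} (p q : ℕ)
    (hchange : ∀ N, ∃ n, N ≤ n ∧
      (mutUpTo i Q (n + 1)).1 p q ≠ (mutUpTo i Q n).1 p q) : Q ∉ CAF i := by
  rintro ⟨L, hL⟩
  obtain ⟨N, hN⟩ := entry_eventually hL p q
  obtain ⟨n, hn, hne⟩ := hchange N
  exact hne (by rw [hN (n + 1) (by omega), hN n hn])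

lemma exists_infinite_fiber (i : ℕ → ℕ) (R : Set ℕ) (hR : R.Finite)
    (hmem : ∀ n, 1 ≤ n → i n ∈ R) : ∃ v ∈ R, {n | 1 ≤ n ∧ i n = v}.Infinite := by
  by_contra h
  push_neg at h
  have hfin : ∀ v ∈ R, {n | 1 ≤ n ∧ i n = v}.Finite := fun v hv =>
    h v hv
  have hsub : {n : ℕ | 1 ≤ n} ⊆ ⋃ v ∈ R, {n | 1 ≤ n ∧ i n = v} := by
    intro n hn
    exact Set.mem_biUnion (hmem n hn) ⟨hn, rfl⟩
  have : ({n : ℕ | 1 ≤ n}).Finite := (hR.biUnion hfin).subset hsub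
  exact (Set.Ici_infinite 1) (by simpa [Set.Ici] using this)

open Classical in
/-- sign sequence flipping at each mutation in `S` -/
noncomputable def flipSgn (i : ℕ → ℕ) (S : Set ℕ) : ℕ → ℤ
  | 0 => 1
  | n + 1 => if i (n + 1) ∈ S then - flipSgn i S n else flipSgn i S n

lemma flipSgn_unit (i : ℕ → ℕ) (S : Set ℕ) (n : ℕ) :
    flipSgn i S n = 1 ∨ flipSgn i S n = -1 := by
  induction n with
  | zero => left; rfl
  | succ n ih =>
    rcases ih with h | h <;> simp only [flipSgn, h] <;> split <;> simp

def eFun (v w : ℕ) : ℕ → ℕ → ℤ := fun p q =>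
  if p = v ∧ q = w then 1 else if p = w ∧ q = v then -1 else 0

noncomputable def edgeQ (v w : ℕ) (h : v ≠ w) : AF ℕ :=
  ⟨eFun v w, by
    intro a b
    simp only [eFun]
    split_ifs <;> omega⟩

lemma eFun_vw (v w : ℕ) : eFun v w v w = 1 := by
  unfold eFun; rw [if_pos ⟨rfl, rfl⟩]

lemma eFun_wv {v w : ℕ} (hvw : v ≠ w) : eFun v w w v = -1 := by
  unfold eFun; rw [if_neg (by omega), if_pos ⟨rfl, rfl⟩]

lemma eFun_ww {v w : ℕ} (hvw : v ≠ w) : eFun v w w w = 0 := by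
  unfold eFun; rw [if_neg (by omega), if_neg (by omega)]

lemma eFun_vanish {v w p q : ℕ} (h : (p ≠ v ∧ p ≠ w) ∨ (q ≠ v ∧ q ≠ w)) :
    eFun v w p q = 0 := by
  simp only [eFun]
  split_ifs <;> omega

lemma corr_left_zero {α β γ : ℤ} (h : α = 0) :
    γ + α * max β 0 + max (-α) 0 * β = γ := by simp [h]

lemma corr_right_zero {α β γ : ℤ} (h : β = 0) :
    γ + α * max β 0 + max (-α) 0 * β = γ := by simp [h]

lemma corr_anti (d γ : ℤ) : γ + (-d) * max d 0 + max (-(-d)) 0 * d = γ := by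
  simp only [neg_neg]; ring

end Glue
section PartIII

open Filter

lemma mut_edge {v w x a b : ℕ} (hvw : v ≠ w) (hxw : x ≠ w) {f : ℕ → ℕ → ℤ} {s : ℤ}
    (hs : s = 1 ∨ s = -1)
    (hab : f a b = s * eFun v w a b) (hax : f a x = s * eFun v w a x)
    (hxb : f x b = s * eFun v w x b) :
    mutateFun x f a b = (if x = v then -s else s) * eFun v w a b := by
  by_cases h1 : a = x
  · rw [h1, mutateFun_left, hxb]
    by_cases hxv : x = v
    · rw [if_pos hxv]; ring
    · rw [if_neg hxv, eFun_vanish (Or.inl ⟨hxv, hxw⟩)]; ring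
  · by_cases h2 : b = x
    · rw [h2, mutateFun_right, hax]
      by_cases hxv : x = v
      · rw [if_pos hxv]; ring
      · rw [if_neg hxv, eFun_vanish (Or.inr ⟨hxv, hxw⟩)]; ring
    · rw [mutateFun_ne _ _ h1 h2, hab, hax, hxb]
      by_cases hxv : x = v
      · rw [if_pos hxv, hxv]
        have hav : a ≠ v := by omega
        have hbv : b ≠ v := by omega
        by_cases haw : a = w
        · rw [haw]
          by_cases hbw : b = w
          · rw [hbw]
            rw [eFun_ww hvw, eFun_wv hvw, eFun_vw v w]
            rcases hs with h | h <;> subst h <;> norm_num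
          · have e2 : eFun v w v b = 0 := eFun_vanish (Or.inr ⟨hbv, hbw⟩)
            have e0 : eFun v w w b = 0 := eFun_vanish (Or.inr ⟨hbv, hbw⟩)
            rw [e2, e0]
            simp
        · have e2 : eFun v w a v = 0 := eFun_vanish (Or.inl ⟨hav, haw⟩)
          have e0 : eFun v w a b = 0 := eFun_vanish (Or.inl ⟨hav, haw⟩)
          rw [e2, e0, mul_zero]
          rw [corr_left_zero rfl]
          ring
      · rw [if_neg hxv, eFun_vanish (Or.inr ⟨hxv, hxw⟩), mul_zero, corr_left_zero rfl]

lemma iii_traj (i : ℕ → ℕ) (V : Set ℕ) (v w : ℕ) (hvw : v ≠ w)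
    (hiV : ∀ n, 1 ≤ n → i n ∈ V) (hiw : ∀ n, 1 ≤ n → i n ≠ w)
    (Q : AF ℕ) (hQ : ∀ a b, a ∈ V → b ∈ V → Q.1 a b = eFun v w a b) :
    ∀ n a b, a ∈ V → b ∈ V →
      (mutUpTo i Q n).1 a b = flipSgn i {v} n * eFun v w a b := by
  intro n
  induction n with
  | zero =>
    intro a b ha hb
    rw [show mutUpTo i Q 0 = Q from rfl, hQ a b ha hb,
      show flipSgn i {v} 0 = 1 from rfl, one_mul]
  | succ n ih =>
    intro a b ha hb
    have hx : i (n + 1) ∈ V := hiV _ (by omega)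
    have hxw : i (n + 1) ≠ w := hiw _ (by omega)
    rw [mutUpTo_succ, mut_fst,
      mut_edge hvw hxw (flipSgn_unit i {v} n) (ih a b ha hb) (ih a (i (n+1)) ha hx)
        (ih (i (n+1)) b hx hb)]
    have : flipSgn i {v} (n + 1)
        = if i (n + 1) = v then - flipSgn i {v} n else flipSgn i {v} n := by
      simp [flipSgn, Set.mem_singleton_iff]
    rw [this]

lemma part3_main (i : ℕ → ℕ) (hfin : {v : ℕ | ∃ n : ℕ, 1 ≤ n ∧ i n = v}.Finite) :
    ¬ @Dense _ (weakTop ℕ) (CAF i) := by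
  letI := weakTop ℕ
  set R := {v : ℕ | ∃ n : ℕ, 1 ≤ n ∧ i n = v} with hR
  obtain ⟨v, hvR, hvinf⟩ := exists_infinite_fiber i R hfin (fun n hn => ⟨n, hn, rfl⟩)
  obtain ⟨w, hw⟩ := (hfin.insert v).infinite_compl.nonempty
  have hwv : w ≠ v := fun h => hw (by rw [h]; exact Set.mem_insert v R)
  have hwR : w ∉ R := fun h => hw (Set.mem_insert_of_mem v h)
  set V : Set ℕ := insert w R with hV
  have hVfin : V.Finite := hfin.insert w
  set P : AF ℕ := edgeQ v w (fun h => hwv h.symm) with hP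
  intro hdense
  obtain ⟨Q', hQ'U, hQ'C⟩ := (dense_iff_inter_open.mp hdense) (Uset P V)
    (isOpen_Uset P hVfin) ⟨P, mem_Uset_self P V⟩
  -- derive a contradiction : Q' diverges
  have hiV : ∀ n, 1 ≤ n → i n ∈ V := fun n hn => Set.mem_insert_of_mem w ⟨n, hn, rfl⟩
  have hiw : ∀ n, 1 ≤ n → i n ≠ w := by
    intro n hn h
    exact hwR ⟨n, hn, h⟩
  have htraj := iii_traj i V v w (fun h => hwv h.symm) hiV hiw Q'
    (fun a b ha hb => restrict_eq_on hQ'U ha hb)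
  have hvV : v ∈ V := Set.mem_insert_of_mem w hvR
  have hwV : w ∈ V := Set.mem_insert w R
  refine not_mem_CAF_of_flip v w ?_ hQ'C
  intro N
  obtain ⟨n, hn, hngt⟩ := hvinf.exists_gt N
  obtain ⟨hn1, hniv⟩ := hn
  -- at time n the entry (v,w) flips; use step n-1 → n
  obtain ⟨m, rfl⟩ : ∃ m, n = m + 1 := ⟨n - 1, by omega⟩
  refine ⟨m, by omega, ?_⟩
  rw [htraj (m + 1) v w hvV hwV, htraj m v w hvV hwV]
  have he : eFun v w v w = 1 := eFun_vw v w
  have hflip : flipSgn i {v} (m + 1) = - flipSgn i {v} m := by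
    simp [flipSgn, hniv]
  rw [he, hflip]
  rcases flipSgn_unit i {v} m with h | h <;> rw [h] <;> norm_num

end PartIII
section PartII

open Filter

lemma part2_main (i : ℕ → ℕ) (hfin : ∀ v : ℕ, {n : ℕ | 1 ≤ n ∧ i n = v}.Finite) :
    @Dense _ (weakTop ℕ) (CAF i) := by
  letI := weakTop ℕ
  rw [dense_iff_inter_open]
  intro U hU hne
  obtain ⟨x, hx⟩ := hne
  obtain ⟨V, hVfin, hsub⟩ := exists_basic hU x hx
  refine ⟨restrictAF V x, hsub ?_, ?_⟩
  · show restrictFun V (restrictFun V x.1) = restrictFun V x.1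
    funext a b
    by_cases h : a ∈ V ∧ b ∈ V <;> simp [restrictFun, h]
  · have hT : {n : ℕ | 1 ≤ n ∧ i n ∈ V}.Finite := by
      have hss : {n : ℕ | 1 ≤ n ∧ i n ∈ V} ⊆ ⋃ v ∈ V, {n | 1 ≤ n ∧ i n = v} :=
        fun n hn => Set.mem_biUnion hn.2 ⟨hn.1, rfl⟩
      exact (hVfin.biUnion (fun v _ => hfin v)).subset hss
    obtain ⟨N, hN⟩ := hT.bddAbove
    apply mem_CAF_of_eventually_const (N := N)
    intro n hn
    refine Nat.le_induction rfl ?_ n hn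
    intro m hm ih
    have hnot : i (m + 1) ∉ V := by
      intro hmem
      have : m + 1 ≤ N := hN (⟨by omega, hmem⟩ : m + 1 ∈ {n : ℕ | 1 ≤ n ∧ i n ∈ V})
      omega
    rw [mutUpTo_succ,
      mut_id_of_suppIn (suppIn_mutUpTo (suppIn_restrictAF V x) i m) hnot, ih]

end PartII
section PartIinfra

open Filter

noncomputable def addAF {X : Type*} (Q R : AF X) : AF X :=
  ⟨fun p q => Q.1 p q + R.1 p q, by
    intro a b
    show Q.1 a b + R.1 a b = -(Q.1 b a + R.1 b a)
    rw [Q.2 a b, R.2 a b]; ring⟩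

lemma restrict_idem {X : Type*} (V : Set X) (f : X → X → ℤ) :
    restrictFun V (restrictFun V f) = restrictFun V f := by
  funext a b
  by_cases h : a ∈ V ∧ b ∈ V <;> simp [restrictFun, h]

/-- reverse mutation sequence: `back i M R j` is the state at time `M - j`,
starting from state `R` at time `M` and undoing mutations. -/
noncomputable def back (i : ℕ → ℕ) (M : ℕ) (R : AF ℕ) : ℕ → AF ℕ
  | 0 => R
  | j + 1 => AF.mut (i (M - j)) (back i M R j)

lemma back_forward (i : ℕ → ℕ) (M : ℕ) (R : AF ℕ) :
    ∀ j, j ≤ M → mutUpTo i (back i M R M) j = back i M R (M - j) := by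
  intro j
  induction j with
  | zero => intro _; rw [Nat.sub_zero]; rfl
  | succ j ih =>
    intro hj
    have hj' : j ≤ M := by omega
    rw [mutUpTo_succ, ih hj']
    have h1 : M - j = (M - (j + 1)) + 1 := by omega
    have h2 : M - (M - (j + 1)) = j + 1 := by omega
    rw [h1, show back i M R ((M - (j+1)) + 1)
        = AF.mut (i (M - (M - (j+1)))) (back i M R (M - (j+1))) from rfl, h2, mut_mut]

/-- mutation inside `V` only depends on the `V`-part (autonomy). -/
lemma restrict_mut_congr {V : Set ℕ} {x : ℕ} (hx : x ∈ V) {A B : AF ℕ}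
    (h : restrictFun V A.1 = restrictFun V B.1) :
    restrictFun V (AF.mut x A).1 = restrictFun V (AF.mut x B).1 := by
  funext p q
  simp only [restrictFun]
  split_ifs with hpq
  · obtain ⟨hp, hq⟩ := hpq
    have hab : A.1 p q = B.1 p q := restrict_eq_on h hp hq
    have hax : A.1 p x = B.1 p x := restrict_eq_on h hp hx
    have hxb : A.1 x q = B.1 x q := restrict_eq_on h hx hq
    rw [mut_fst, mut_fst]
    by_cases h1 : p = x
    · rw [h1, mutateFun_left, mutateFun_left, hxb]
    · by_cases h2 : q = x
      · rw [h2, mutateFun_right, mutateFun_right, hax]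
      · rw [mutateFun_ne _ _ h1 h2, mutateFun_ne _ _ h1 h2, hab, hax, hxb]
  · rfl

/-- quivers with no arrows between `V` and its complement -/
def SplitAt (V : Set ℕ) (Q : AF ℕ) : Prop :=
  ∀ p q, Q.1 p q ≠ 0 → (p ∈ V ∧ q ∈ V) ∨ (p ∉ V ∧ q ∉ V)

lemma splitAt_mut {V : Set ℕ} {Q : AF ℕ} (hQ : SplitAt V Q) (x : ℕ) :
    SplitAt V (AF.mut x Q) := by
  intro p q h
  rw [mut_fst] at h
  by_cases h1 : p = x
  · rw [h1] at h ⊢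
    rw [mutateFun_left] at h
    exact hQ x q (by omega)
  · by_cases h2 : q = x
    · rw [h2] at h ⊢
      rw [mutateFun_right] at h
      exact hQ p x (by omega)
    · rw [mutateFun_ne _ _ h1 h2] at h
      by_cases hα : Q.1 p x = 0
      · simp only [hα, neg_zero, zero_mul, add_zero, max_self, zero_add] at h
        exact hQ p q h
      · by_cases hβ : Q.1 x q = 0
        · simp only [hβ, mul_zero, add_zero, max_self] at h
          exact hQ p q h
        · rcases hQ p x hα with ⟨hp, hx⟩ | ⟨hp, hx⟩ <;>
            rcases hQ x q hβ with ⟨hx', hq⟩ | ⟨hx', hq⟩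
          · exact Or.inl ⟨hp, hq⟩
          · exact absurd hx hx'
          · exact absurd hx' hx
          · exact Or.inr ⟨hp, hq⟩

lemma restrict_mut_of_split {V : Set ℕ} {x : ℕ} (hx : x ∉ V) {A : AF ℕ}
    (hA : SplitAt V A) : restrictFun V (AF.mut x A).1 = restrictFun V A.1 := by
  funext p q
  simp only [restrictFun]
  split_ifs with hpq
  · obtain ⟨hp, hq⟩ := hpq
    have h1 : p ≠ x := fun h => hx (h ▸ hp)
    have h2 : q ≠ x := fun h => hx (h ▸ hq)
    rw [mut_fst, mutateFun_ne _ _ h1 h2]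
    have hα : A.1 p x = 0 := by
      by_contra hc
      rcases hA p x hc with ⟨_, hxV⟩ | ⟨hpV, _⟩
      · exact hx hxV
      · exact hpV hp
    rw [hα]; simp
  · rfl

/-- quivers supported on `V ∪ {w}` with `w` only linked to `V` -/
def GoodAt (V : Set ℕ) (w : ℕ) (Q : AF ℕ) : Prop :=
  ∀ p q, Q.1 p q ≠ 0 →
    (p ∈ V ∧ q ∈ V) ∨ (p ∈ V ∧ q = w) ∨ (p = w ∧ q ∈ V)

lemma goodAt_row_zero {V : Set ℕ} {w : ℕ} {Q : AF ℕ} (h : GoodAt V w Q)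
    {x : ℕ} (hx : x ∉ V) (hxw : x ≠ w) : ∀ a, Q.1 x a = 0 := by
  intro a
  by_contra hc
  rcases h x a hc with ⟨h1, _⟩ | ⟨h1, _⟩ | ⟨h1, _⟩
  · exact hx h1
  · exact hx h1
  · exact hxw h1

lemma goodAt_mut {V : Set ℕ} {w : ℕ} (hw : w ∉ V) {Q : AF ℕ} (hQ : GoodAt V w Q)
    (x : ℕ) : GoodAt V w (AF.mut x Q) := by
  by_cases hxV : x ∈ V
  · intro p q h
    rw [mut_fst] at h
    have hxw : x ≠ w := fun h' => hw (h' ▸ hxV)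
    by_cases h1 : p = x
    · rw [h1] at h ⊢
      rw [mutateFun_left] at h
      rcases hQ x q (by omega) with ⟨_, hq⟩ | ⟨_, hq⟩ | ⟨hxw', _⟩
      · exact Or.inl ⟨hxV, hq⟩
      · exact Or.inr (Or.inl ⟨hxV, hq⟩)
      · exact absurd hxw' hxw
    · by_cases h2 : q = x
      · rw [h2] at h ⊢
        rw [mutateFun_right] at h
        rcases hQ p x (by omega) with ⟨hp, _⟩ | ⟨_, hxw'⟩ | ⟨hp, _⟩
        · exact Or.inl ⟨hp, hxV⟩
        · exact absurd hxw' hxw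
        · exact Or.inr (Or.inr ⟨hp, hxV⟩)
      · rw [mutateFun_ne _ _ h1 h2] at h
        by_cases hα : Q.1 p x = 0
        · simp only [hα, neg_zero, zero_mul, add_zero, max_self, zero_add] at h
          exact hQ p q h
        · by_cases hβ : Q.1 x q = 0
          · simp only [hβ, mul_zero, add_zero, max_self] at h
            exact hQ p q h
          · have hp : p ∈ V ∨ p = w := by
              rcases hQ p x hα with ⟨hp, _⟩ | ⟨hp, _⟩ | ⟨hp, hxV'⟩
              · exact Or.inl hp
              · exact Or.inl hp
              · exact Or.inr hp
            have hq : q ∈ V ∨ q = w := by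
              rcases hQ x q hβ with ⟨_, hq⟩ | ⟨_, hq⟩ | ⟨_, hq⟩
              · exact Or.inl hq
              · exact Or.inr hq
              · exact Or.inl hq
            rcases hp with hp | hp
            · rcases hq with hq | hq
              · exact Or.inl ⟨hp, hq⟩
              · exact Or.inr (Or.inl ⟨hp, hq⟩)
            · rcases hq with hq | hq
              · exact Or.inr (Or.inr ⟨hp, hq⟩)
              · -- p = w, q = w : the entry is in fact zero
                exfalso
                rw [hp, hq] at h
                rw [AF.diag, Q.skew x w] at h
                have hzz : Q.1 w x * max (-(Q.1 w x)) 0 + max (-(Q.1 w x)) 0 * (-(Q.1 w x)) = 0 :=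
                  corr_neg_self _
                omega
  · by_cases hxw : x = w
    · intro p q h
      rw [mut_fst] at h
      by_cases h1 : p = x
      · rw [h1] at h ⊢
        rw [mutateFun_left] at h
        rcases hQ x q (by omega) with ⟨hxV', _⟩ | ⟨hxV', _⟩ | ⟨_, hq⟩
        · exact absurd hxV' hxV
        · exact absurd hxV' hxV
        · exact Or.inr (Or.inr ⟨hxw, hq⟩)
      · by_cases h2 : q = x
        · rw [h2] at h ⊢
          rw [mutateFun_right] at h
          rcases hQ p x (by omega) with ⟨_, hxV'⟩ | ⟨hp, _⟩ | ⟨_, hxV'⟩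
          · exact absurd hxV' hxV
          · exact Or.inr (Or.inl ⟨hp, hxw⟩)
          · exact absurd hxV' hxV
        · rw [mutateFun_ne _ _ h1 h2] at h
          by_cases hα : Q.1 p x = 0
          · simp only [hα, neg_zero, zero_mul, add_zero, max_self, zero_add] at h
            exact hQ p q h
          · by_cases hβ : Q.1 x q = 0
            · simp only [hβ, mul_zero, add_zero, max_self] at h
              exact hQ p q h
            · have hp : p ∈ V := by
                rcases hQ p x hα with ⟨_, hxV'⟩ | ⟨hp, _⟩ | ⟨_, hxV'⟩
                · exact absurd hxV' hxV
                · exact hp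
                · exact absurd hxV' hxV
              have hq : q ∈ V := by
                rcases hQ x q hβ with ⟨hxV', _⟩ | ⟨hxV', _⟩ | ⟨_, hq⟩
                · exact absurd hxV' hxV
                · exact absurd hxV' hxV
                · exact hq
              exact Or.inl ⟨hp, hq⟩
    · rw [mut_id_of_row_zero (goodAt_row_zero hQ hxV hxw)]
      exact hQ

/-- pull back: `back i M R` has the same `V`-part trajectory as the forward
trajectory of the `V`-restricted quiver, run backwards. -/
lemma pullback_restrict (i : ℕ → ℕ) (V : Set ℕ) (Pt : AF ℕ) (hPt : SuppIn V Pt)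
    (M : ℕ) (R : AF ℕ)
    (hR0 : restrictFun V R.1 = restrictFun V (mutUpTo i Pt M).1)
    (hid : ∀ j, j < M → i (M - j) ∉ V →
      restrictFun V (AF.mut (i (M - j)) (back i M R j)).1
        = restrictFun V (back i M R j).1) :
    ∀ j, j ≤ M →
      restrictFun V (back i M R j).1 = restrictFun V (mutUpTo i Pt (M - j)).1 := by
  intro j
  induction j with
  | zero => intro _; rw [Nat.sub_zero]; exact hR0
  | succ j ih =>
    intro hj
    have hj' : j < M := by omega
    have harith : M - j = (M - (j + 1)) + 1 := by omega
    have hstep : mutUpTo i Pt (M - j)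
        = AF.mut (i (M - j)) (mutUpTo i Pt (M - (j + 1))) := by
      rw [harith]; rfl
    by_cases hxV : i (M - j) ∈ V
    · have := restrict_mut_congr hxV (ih (by omega))
      rw [show back i M R (j+1) = AF.mut (i (M - j)) (back i M R j) from rfl]
      rw [this, hstep, mut_mut]
    · rw [show back i M R (j+1) = AF.mut (i (M - j)) (back i M R j) from rfl]
      rw [hid j hj' hxV, ih (by omega), hstep,
        mut_id_of_suppIn (suppIn_mutUpTo hPt i (M - (j+1))) hxV]

end PartIinfra
section Case1

open Filter

lemma addAF_fst {X : Type*} (Q R : AF X) (p q : X) :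
    (addAF Q R).1 p q = Q.1 p q + R.1 p q := rfl

lemma mut_edge_w {v w a b : ℕ} (hvw : v ≠ w) {f : ℕ → ℕ → ℤ} {s : ℤ}
    (hs : s = 1 ∨ s = -1)
    (hab : f a b = s * eFun v w a b) (haw : f a w = s * eFun v w a w)
    (hwb : f w b = s * eFun v w w b) :
    mutateFun w f a b = -s * eFun v w a b := by
  by_cases h1 : a = w
  · rw [h1, mutateFun_left, hwb]; ring
  · by_cases h2 : b = w
    · rw [h2, mutateFun_right, haw]; ring
    · rw [mutateFun_ne _ _ h1 h2, hab, haw, hwb]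
      by_cases hav : a = v
      · rw [hav]
        by_cases hbv : b = v
        · rw [hbv]
          rw [eFun_vw, eFun_wv hvw, show eFun v w v v = 0 from by
            unfold eFun; rw [if_neg (by omega), if_neg (by omega)]]
          rcases hs with h | h <;> subst h <;> norm_num
        · have e1 : eFun v w w b = 0 := eFun_vanish (Or.inr ⟨hbv, h2⟩)
          have e2 : eFun v w v b = 0 := eFun_vanish (Or.inr ⟨hbv, h2⟩)
          rw [e1, e2]
          simp
      · have e1 : eFun v w a w = 0 := eFun_vanish (Or.inl ⟨hav, h1⟩)
        have e2 : eFun v w a b = 0 := eFun_vanish (Or.inl ⟨hav, h1⟩)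
        rw [e1, e2, mul_zero, corr_left_zero rfl]
        ring

lemma mut_edge_out {V : Set ℕ} {v w : ℕ} (hvV : v ∉ V) (hwV : w ∉ V) (hvw : v ≠ w)
    {Q : AF ℕ} {s : ℤ} (hs : s = 1 ∨ s = -1)
    (hQ : ∀ p q, ¬(p ∈ V ∧ q ∈ V) → Q.1 p q = s * eFun v w p q) (x : ℕ) :
    ∀ p q, ¬(p ∈ V ∧ q ∈ V) →
      (AF.mut x Q).1 p q = (if x = v ∨ x = w then -s else s) * eFun v w p q := by
  intro p q hpq
  rw [mut_fst]
  by_cases hxV : x ∈ V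
  · have hxv : x ≠ v := fun h => hvV (h ▸ hxV)
    have hxw : x ≠ w := fun h => hwV (h ▸ hxV)
    rw [if_neg (by tauto)]
    by_cases h1 : p = x
    · rw [h1, mutateFun_left, hQ x q (fun h => hpq ⟨h1 ▸ hxV, h.2⟩),
        eFun_vanish (Or.inl ⟨hxv, hxw⟩)]
      ring
    · by_cases h2 : q = x
      · rw [h2, mutateFun_right, hQ p x (fun h => hpq ⟨h.1, h2 ▸ hxV⟩),
        eFun_vanish (Or.inr ⟨hxv, hxw⟩)]
        ring
      · rw [mutateFun_ne _ _ h1 h2]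
        by_cases hpV : p ∈ V
        · have hqV : q ∉ V := fun h => hpq ⟨hpV, h⟩
          rw [hQ x q (fun h => hqV h.2), eFun_vanish (Or.inl ⟨hxv, hxw⟩), mul_zero,
            corr_right_zero rfl, hQ p q hpq]
        · rw [hQ p x (fun h => hpV h.1), eFun_vanish (Or.inr ⟨hxv, hxw⟩), mul_zero,
            corr_left_zero rfl, hQ p q hpq]
  · by_cases hxw : x = w
    · rw [hxw, if_pos (Or.inr rfl)]
      exact mut_edge_w hvw hs (hQ p q hpq) (hQ p w (fun h => hwV h.2))
        (hQ w q (fun h => hwV h.1))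
    · rw [mut_edge hvw hxw hs (hQ p q hpq) (hQ p x (fun h => hxV h.2))
        (hQ x q (fun h => hxV h.1))]
      by_cases hxv : x = v <;> simp [hxv, hxw]

lemma case1_div (i : ℕ → ℕ) (P : AF ℕ) (V : Set ℕ) (hVfin : V.Finite)
    (v : ℕ) (hvV : v ∉ V) (hvinf : {n : ℕ | 1 ≤ n ∧ i n = v}.Infinite) :
    ∃ Q', Q' ∈ Uset P V ∧ Q' ∉ CAF i := by
  obtain ⟨w, hw⟩ := (hVfin.insert v).infinite_compl.nonempty
  have hwV : w ∉ V := fun h => hw (Set.mem_insert_of_mem v h)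
  have hvw : v ≠ w := fun h => hw (h ▸ Set.mem_insert v V)
  refine ⟨addAF (restrictAF V P) (edgeQ v w hvw), ?_, ?_⟩
  · show restrictFun V (addAF (restrictAF V P) (edgeQ v w hvw)).1 = restrictFun V P.1
    funext p q
    simp only [restrictFun]
    split_ifs with hpq
    · rw [addAF_fst]
      show restrictFun V P.1 p q + eFun v w p q = P.1 p q
      rw [eFun_vanish (Or.inl ⟨fun (h : p = v) => hvV (h ▸ hpq.1),
        fun (h : p = w) => hwV (h ▸ hpq.1)⟩)]
      simp [restrictFun, hpq]
    · rfl
  · set Q' := addAF (restrictAF V P) (edgeQ v w hvw) with hQ'def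
    have hInv : ∀ n, ∀ p q, ¬(p ∈ V ∧ q ∈ V) →
        (mutUpTo i Q' n).1 p q = flipSgn i {v, w} n * eFun v w p q := by
      intro n
      induction n with
      | zero =>
        intro p q hpq
        show Q'.1 p q = 1 * eFun v w p q
        rw [hQ'def, addAF_fst]
        show restrictFun V P.1 p q + eFun v w p q = 1 * eFun v w p q
        rw [show restrictFun V P.1 p q = 0 from if_neg hpq]
        ring
      | succ n ih =>
        intro p q hpq
        rw [mutUpTo_succ]
        rw [mut_edge_out hvV hwV hvw (flipSgn_unit i {v, w} n) ih (i (n+1)) p q hpq]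
        have : flipSgn i {v, w} (n + 1) = if i (n+1) = v ∨ i (n+1) = w
            then -flipSgn i {v, w} n else flipSgn i {v, w} n := by
          simp [flipSgn, Set.mem_insert_iff, Set.mem_singleton_iff]
        rw [this]
    have hvwV : ¬(v ∈ V ∧ w ∈ V) := fun h => hvV h.1
    refine not_mem_CAF_of_flip v w ?_
    intro N
    obtain ⟨n, hn, hngt⟩ := hvinf.exists_gt N
    obtain ⟨hn1, hniv⟩ := hn
    obtain ⟨m, rfl⟩ : ∃ m, n = m + 1 := ⟨n - 1, by omega⟩
    refine ⟨m, by omega, ?_⟩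
    rw [hInv (m + 1) v w hvwV, hInv m v w hvwV, eFun_vw v w]
    have hflip : flipSgn i {v, w} (m + 1) = - flipSgn i {v, w} m := by
      simp [flipSgn, hniv]
    rw [hflip]
    rcases flipSgn_unit i {v, w} m with h | h <;> rw [h] <;> norm_num

end Case1
section Case3

open Filter

lemma edgeQ_fst (v w : ℕ) (h : v ≠ w) : (edgeQ v w h).1 = eFun v w := rfl

lemma eFun_vanish_w {v w p q : ℕ} (hp : p ≠ w) (hq : q ≠ w) : eFun v w p q = 0 := by
  unfold eFun; rw [if_neg (by omega), if_neg (by omega)]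

lemma case3_div (i : ℕ → ℕ) (P : AF ℕ) (V : Set ℕ) (hVfin : V.Finite)
    (hallV : ∀ u : ℕ, {n : ℕ | 1 ≤ n ∧ i n = u}.Infinite → u ∈ V)
    (s₀ : ℕ) (hs₀inf : {n : ℕ | 1 ≤ n ∧ i n = s₀}.Infinite) :
    ∃ Q', Q' ∈ Uset P V ∧ Q' ∉ CAF i := by
  classical
  have hs₀V : s₀ ∈ V := hallV s₀ hs₀inf
  have hB : {n : ℕ | 1 ≤ n ∧ i n ∈ V ∧ ¬ {m : ℕ | 1 ≤ m ∧ i m = i n}.Infinite}.Finite := by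
    have hsub : {n : ℕ | 1 ≤ n ∧ i n ∈ V ∧ ¬ {m : ℕ | 1 ≤ m ∧ i m = i n}.Infinite}
        ⊆ ⋃ u ∈ {u : ℕ | u ∈ V ∧ ¬ {m : ℕ | 1 ≤ m ∧ i m = u}.Infinite},
          {n : ℕ | 1 ≤ n ∧ i n = u} := by
      intro n hn
      exact Set.mem_biUnion ⟨hn.2.1, hn.2.2⟩ ⟨hn.1, rfl⟩
    refine ((Set.Finite.subset hVfin (fun u hu => hu.1)).biUnion
      (fun u hu => Set.not_infinite.mp hu.2)).subset hsub
  obtain ⟨M, hM⟩ := hB.bddAbove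
  have himg : (V ∪ (i '' Set.Icc 1 M)).Finite := hVfin.union ((Set.finite_Icc 1 M).image i)
  obtain ⟨w, hw⟩ := himg.infinite_compl.nonempty
  have hwV : w ∉ V := fun h => hw (Or.inl h)
  have hwim : ∀ m, 1 ≤ m → m ≤ M → i m ≠ w := fun m h1 h2 heq =>
    hw (Or.inr ⟨m, ⟨h1, h2⟩, heq⟩)
  have hs₀w : s₀ ≠ w := fun h => hwV (h ▸ hs₀V)
  set Pt : AF ℕ := restrictAF V P with hPtdef
  have hPt : SuppIn V Pt := suppIn_restrictAF V P
  set R : AF ℕ := addAF (mutUpTo i Pt M) (edgeQ s₀ w hs₀w) with hRdef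
  have hGoodR : GoodAt V w R := by
    intro p q h
    rw [hRdef, addAF_fst, edgeQ_fst] at h
    by_cases hA : (mutUpTo i Pt M).1 p q = 0
    · rw [hA, zero_add] at h
      by_cases h1 : p = s₀ ∧ q = w
      · exact Or.inr (Or.inl ⟨h1.1 ▸ hs₀V, h1.2⟩)
      · by_cases h2 : p = w ∧ q = s₀
        · exact Or.inr (Or.inr ⟨h2.1, h2.2 ▸ hs₀V⟩)
        · exact absurd (by unfold eFun; rw [if_neg h1, if_neg h2] :
            eFun s₀ w p q = 0) h
    · exact Or.inl (suppIn_mutUpTo hPt i M p q hA)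
  set Q' := back i M R M with hQ'def
  have hGoodBack : ∀ j, GoodAt V w (back i M R j) := by
    intro j
    induction j with
    | zero => exact hGoodR
    | succ j ih => exact goodAt_mut hwV ih _
  have hGoodTraj : ∀ n, GoodAt V w (mutUpTo i Q' n) := by
    intro n
    induction n with
    | zero => exact hGoodBack M
    | succ n ih => exact goodAt_mut hwV ih _
  have hrestr := pullback_restrict i V Pt hPt M R
    (by
      funext p q
      simp only [restrictFun]
      split_ifs with hpq
      · rw [hRdef, addAF_fst, edgeQ_fst, eFun_vanish_w (v := s₀) (fun (h : p = w) => hwV (h ▸ hpq.1))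
          (fun (h : q = w) => hwV (h ▸ hpq.2)), add_zero]
      · rfl)
    (by
      intro j hj hxV
      have hxw : i (M - j) ≠ w := hwim (M - j) (by omega) (by omega)
      rw [mut_id_of_row_zero (goodAt_row_zero (hGoodBack j) hxV hxw)])
  have hQ'U : Q' ∈ Uset P V := by
    have h1 := hrestr M le_rfl
    rw [Nat.sub_self] at h1
    show restrictFun V Q'.1 = restrictFun V P.1
    exact h1.trans (restrict_idem V P.1)
  refine ⟨Q', hQ'U, ?_⟩
  have hfwd : mutUpTo i Q' M = R := by
    have h1 := back_forward i M R M le_rfl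
    rwa [Nat.sub_self] at h1
  -- the column of `w` keeps meeting `S`
  have hcol : ∀ n, M ≤ n → ∃ u, {m : ℕ | 1 ≤ m ∧ i m = u}.Infinite ∧
      (mutUpTo i Q' n).1 u w ≠ 0 := by
    intro n hn
    induction n, hn using Nat.le_induction with
    | base =>
      refine ⟨s₀, hs₀inf, ?_⟩
      rw [hfwd, hRdef, addAF_fst, edgeQ_fst]
      have hA : (mutUpTo i Pt M).1 s₀ w = 0 := by
        by_contra hc
        exact hwV (suppIn_mutUpTo hPt i M s₀ w hc).2
      rw [hA, zero_add, eFun_vw]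
      omega
    | succ n hn ih =>
      obtain ⟨u, huS, hne⟩ := ih
      have hxcase : {m : ℕ | 1 ≤ m ∧ i m = i (n+1)}.Infinite ∨ i (n+1) ∉ V := by
        by_contra hc
        push_neg at hc
        have hmem : n + 1 ∈ {n : ℕ | 1 ≤ n ∧ i n ∈ V ∧
            ¬ {m : ℕ | 1 ≤ m ∧ i m = i n}.Infinite} := ⟨by omega, hc.2, Set.not_infinite.mpr hc.1⟩
        have := hM hmem
        omega
      have huV : u ∈ V := hallV u huS
      have huw : u ≠ w := fun h => hwV (h ▸ huV)
      rw [mutUpTo_succ]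
      rcases hxcase with hxS | hxV
      · have hxV' : i (n+1) ∈ V := hallV _ hxS
        have hxw : i (n+1) ≠ w := fun h => hwV (h ▸ hxV')
        by_cases hx0 : (mutUpTo i Q' n).1 (i (n+1)) w = 0
        · refine ⟨u, huS, ?_⟩
          by_cases hux : u = i (n+1)
          · rw [hux] at hne
            exact absurd hx0 hne
          · rw [mut_fst, mutateFun_ne _ _ hux (fun h => hxw h.symm), hx0,
              corr_right_zero rfl]
            exact hne
        · refine ⟨i (n+1), hxS, ?_⟩
          rw [mut_fst, mutateFun_left]
          omega
      · by_cases hxw : i (n+1) = w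
        · refine ⟨u, huS, ?_⟩
          rw [mut_fst, hxw, mutateFun_right]
          omega
        · rw [mut_id_of_row_zero (goodAt_row_zero (hGoodTraj n) hxV hxw)]
          exact ⟨u, huS, hne⟩
  rintro ⟨L, hL⟩
  have hNex : ∀ u : ℕ, ∃ N, ∀ n, N ≤ n → (mutUpTo i Q' n).1 u w = L.1 u w :=
    fun u => entry_eventually hL u w
  choose Nf hNf using hNex
  obtain ⟨K, hK⟩ := (hVfin.image Nf).bddAbove
  obtain ⟨u, huS, hune⟩ := hcol (max K M) (le_max_right _ _)
  have huV : u ∈ V := hallV u huS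
  have hKu : Nf u ≤ K := hK (Set.mem_image_of_mem Nf huV)
  have hLu : L.1 u w ≠ 0 := by
    rw [← hNf u (max K M) (le_trans hKu (le_max_left _ _))]
    exact hune
  obtain ⟨m, hm, hmgt⟩ := huS.exists_gt (max K M)
  obtain ⟨m', rfl⟩ : ∃ m', m = m' + 1 := ⟨m - 1, by omega⟩
  have h1 := hNf u (m' + 1) (by omega)
  have h2 := hNf u m' (by omega)
  have hflip : (mutUpTo i Q' (m' + 1)).1 u w = -(mutUpTo i Q' m').1 u w := by
    rw [mutUpTo_succ, mut_fst, hm.2, mutateFun_left]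
  rw [h1, h2] at hflip
  omega

end Case3
section Case2

open Filter

open Classical in
noncomputable def starF (T : Set ℕ) (a b : ℕ) : ℕ → ℕ → ℤ := fun p q =>
  (if p = a ∧ q ∈ T then (1:ℤ) else 0) - (if q = a ∧ p ∈ T then 1 else 0)
  + (if p ∈ T ∧ q = b then 1 else 0) - (if q ∈ T ∧ p = b then 1 else 0)

lemma starF_skew (T : Set ℕ) (a b : ℕ) : ∀ p q, starF T a b p q = - starF T a b q p := by
  intro p q
  unfold starF
  ring

lemma starF_vanish {T : Set ℕ} {a b p q : ℕ} (h : starF T a b p q ≠ 0) :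
    (p = a ∧ q ∈ T) ∨ (q = a ∧ p ∈ T) ∨ (p ∈ T ∧ q = b) ∨ (q ∈ T ∧ p = b) := by
  by_contra hc
  push_neg at hc
  refine h ?_
  unfold starF
  rw [if_neg (fun h' => hc.1 h'.1 h'.2), if_neg (fun h' => hc.2.1 h'.1 h'.2),
    if_neg (fun h' => hc.2.2.1 h'.1 h'.2), if_neg (fun h' => hc.2.2.2 h'.1 h'.2)]
  ring

lemma starF_at {T : Set ℕ} {a b t : ℕ} (ht : t ∈ T) (haT : a ∉ T) (hab : a ≠ b) :
    starF T a b a t = 1 := by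
  unfold starF
  rw [if_pos ⟨rfl, ht⟩, if_neg (fun h => haT h.2), if_neg (fun h => haT h.1),
    if_neg (fun h => hab h.2)]
  ring

lemma starF_tb {T : Set ℕ} {a b t : ℕ} (ht : t ∈ T) (hbT : b ∉ T) (hab : a ≠ b) :
    starF T a b t b = 1 := by
  unfold starF
  rw [if_neg (fun h => hbT h.2), if_neg (fun h => hab h.1.symm),
    if_pos ⟨ht, rfl⟩, if_neg (fun h => hbT h.1)]
  ring

/-- invariant for the star construction -/
def StarInv (V T : Set ℕ) (a b : ℕ) (Q : AF ℕ) : Prop :=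
  (∀ t ∈ T, (Q.1 a t = 1 ∨ Q.1 a t = -1) ∧ Q.1 t b = Q.1 a t) ∧
  (∀ p q, Q.1 p q ≠ 0 →
    (p ∈ V ∧ q ∈ V) ∨ (p = a ∧ q ∈ T) ∨ (p ∈ T ∧ q = a) ∨ (p ∈ T ∧ q = b) ∨
    (p = b ∧ q ∈ T) ∨ (p = a ∧ q = b) ∨ (p = b ∧ q = a))

lemma starInv_row_zero {V T : Set ℕ} {a b : ℕ} {Q : AF ℕ}
    (hInv : StarInv V T a b Q) {x : ℕ} (hxV : x ∉ V) (hxa : x ≠ a) (hxb : x ≠ b)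
    (hxT : x ∉ T) : ∀ y, Q.1 x y = 0 := by
  intro y
  by_contra hc
  rcases hInv.2 x y hc with ⟨h, _⟩ | ⟨h, _⟩ | ⟨h, _⟩ | ⟨h, _⟩ | ⟨h, _⟩ | ⟨h, _⟩ | ⟨h, _⟩
  · exact hxV h
  · exact hxa h
  · exact hxT h
  · exact hxT h
  · exact hxb h
  · exact hxa h
  · exact hxb h

lemma starInv_mut {V T : Set ℕ} {a b : ℕ} (haV : a ∉ V) (hbV : b ∉ V) (hab : a ≠ b)
    (haT : a ∉ T) (hbT : b ∉ T) (hTV : ∀ t, t ∈ T → t ∉ V)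
    {Q : AF ℕ} (hInv : StarInv V T a b Q) {x : ℕ} (hxa : x ≠ a) (hxb : x ≠ b) :
    StarInv V T a b (AF.mut x Q) := by
  obtain ⟨h1, h2⟩ := hInv
  -- first : a row of `x` admissibility helper
  by_cases hxV : x ∈ V
  · have hxT : x ∉ T := fun h => hTV x h hxV
    constructor
    · intro t ht
      have htx : t ≠ x := fun h => hTV t ht (h ▸ hxV)
      have hax : a ≠ x := fun h => haV (h ▸ hxV)
      have hbx : b ≠ x := fun h => hbV (h ▸ hxV)
      have hα : Q.1 a x = 0 := by
        by_contra hc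
        rcases h2 a x hc with ⟨h, _⟩ | ⟨_, h⟩ | ⟨h, _⟩ | ⟨h, _⟩ | ⟨h, _⟩ | ⟨_, h⟩ | ⟨h, _⟩
        · exact haV h
        · exact hxT h
        · exact haT h
        · exact haT h
        · exact hab h
        · exact hxb h
        · exact hab h
      have hα' : Q.1 t x = 0 := by
        by_contra hc
        rcases h2 t x hc with ⟨h, _⟩ | ⟨h, _⟩ | ⟨_, h⟩ | ⟨_, h⟩ | ⟨h, _⟩ | ⟨_, h⟩ | ⟨_, h⟩
        · exact hTV t ht h
        · exact haT (h ▸ ht)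
        · exact hxa h
        · exact hxb h
        · exact hbT (h ▸ ht)
        · exact hxb h
        · exact hxa h
      have e1 : (AF.mut x Q).1 a t = Q.1 a t := by
        rw [mut_fst, mutateFun_ne _ _ hax htx, hα, corr_left_zero rfl]
      have e2 : (AF.mut x Q).1 t b = Q.1 t b := by
        rw [mut_fst, mutateFun_ne _ _ htx hbx, hα', corr_left_zero rfl]
      rw [e1, e2]
      exact h1 t ht
    · intro p q h
      rw [mut_fst] at h
      by_cases hp : p = x
      · rw [hp] at h ⊢
        rw [mutateFun_left] at h
        exact h2 x q (by omega)
      · by_cases hq : q = x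
        · rw [hq] at h ⊢
          rw [mutateFun_right] at h
          exact h2 p x (by omega)
        · rw [mutateFun_ne _ _ hp hq] at h
          by_cases hα : Q.1 p x = 0
          · simp only [hα, neg_zero, zero_mul, add_zero, max_self, zero_add] at h
            exact h2 p q h
          · by_cases hβ : Q.1 x q = 0
            · simp only [hβ, mul_zero, add_zero, max_self] at h
              exact h2 p q h
            · have hpV : p ∈ V := by
                rcases h2 p x hα with ⟨h', _⟩ | ⟨_, h'⟩ | ⟨_, h'⟩ | ⟨_, h'⟩ | ⟨_, h'⟩ |
                  ⟨_, h'⟩ | ⟨_, h'⟩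
                · exact h'
                · exact absurd h' hxT
                · exact absurd (h' ▸ hxV) haV
                · exact absurd (h' ▸ hxV) hbV
                · exact absurd h' hxT
                · exact absurd (h' ▸ hxV) hbV
                · exact absurd (h' ▸ hxV) haV
              have hqV : q ∈ V := by
                rcases h2 x q hβ with ⟨_, h'⟩ | ⟨h', _⟩ | ⟨h', _⟩ | ⟨h', _⟩ | ⟨h', _⟩ |
                  ⟨h', _⟩ | ⟨h', _⟩
                · exact h'
                · exact absurd h' hxa
                · exact absurd h' hxT
                · exact absurd h' hxT
                · exact absurd h' hxb
                · exact absurd h' hxa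
                · exact absurd h' hxb
              exact Or.inl ⟨hpV, hqV⟩
  · by_cases hxT : x ∈ T
    · have hax : a ≠ x := fun h => haT (h ▸ hxT)
      have hbx : b ≠ x := fun h => hbT (h ▸ hxT)
      constructor
      · intro t ht
        by_cases htx : t = x
        · rw [htx]
          have e1 : (AF.mut x Q).1 a x = -Q.1 a x := by
            rw [mut_fst, mutateFun_right]
          have e2 : (AF.mut x Q).1 x b = -Q.1 x b := by
            rw [mut_fst, mutateFun_left]
          rw [e1, e2, (h1 x hxT).2]
          rcases (h1 x hxT).1 with h | h <;> rw [h] <;> norm_num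
        · have hβ : Q.1 x t = 0 := by
            by_contra hc
            rcases h2 x t hc with ⟨h', _⟩ | ⟨h', _⟩ | ⟨_, h'⟩ | ⟨_, h'⟩ | ⟨h', _⟩ |
              ⟨h', _⟩ | ⟨h', _⟩
            · exact hxV h'
            · exact hax h'.symm
            · exact haT (h' ▸ ht)
            · exact hbT (h' ▸ ht)
            · exact hbx h'.symm
            · exact hax h'.symm
            · exact hbx h'.symm
          have hα' : Q.1 t x = 0 := by
            rw [Q.skew t x]
            have : Q.1 x t = 0 := hβ
            omega
          have e1 : (AF.mut x Q).1 a t = Q.1 a t := by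
            rw [mut_fst, mutateFun_ne _ _ hax (fun h => htx h), hβ, corr_right_zero rfl]
          have e2 : (AF.mut x Q).1 t b = Q.1 t b := by
            rw [mut_fst, mutateFun_ne _ _ (fun h => htx h) hbx, hα', corr_left_zero rfl]
          rw [e1, e2]
          exact h1 t ht
      · intro p q h
        rw [mut_fst] at h
        by_cases hp : p = x
        · rw [hp] at h ⊢
          rw [mutateFun_left] at h
          exact h2 x q (by omega)
        · by_cases hq : q = x
          · rw [hq] at h ⊢
            rw [mutateFun_right] at h
            exact h2 p x (by omega)
          · rw [mutateFun_ne _ _ hp hq] at h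
            by_cases hα : Q.1 p x = 0
            · simp only [hα, neg_zero, zero_mul, add_zero, max_self, zero_add] at h
              exact h2 p q h
            · by_cases hβ : Q.1 x q = 0
              · simp only [hβ, mul_zero, add_zero, max_self] at h
                exact h2 p q h
              · have hpab : p = a ∨ p = b := by
                  rcases h2 p x hα with ⟨_, h'⟩ | ⟨h', _⟩ | ⟨h', h''⟩ | ⟨h', h''⟩ |
                    ⟨h', _⟩ | ⟨h', h''⟩ | ⟨h', h''⟩
                  · exact absurd h' hxV
                  · exact Or.inl h'
                  · exact absurd h'' (fun hh => hax hh.symm)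
                  · exact absurd h'' (fun hh => hbx hh.symm)
                  · exact Or.inr h'
                  · exact absurd h'' (fun hh => hbx hh.symm)
                  · exact absurd h'' (fun hh => hax hh.symm)
                have hqab : q = a ∨ q = b := by
                  rcases h2 x q hβ with ⟨h', _⟩ | ⟨h', _⟩ | ⟨_, h'⟩ | ⟨_, h'⟩ |
                    ⟨h', _⟩ | ⟨h', _⟩ | ⟨h', _⟩
                  · exact absurd h' hxV
                  · exact absurd h' (fun hh => hax hh.symm)
                  · exact Or.inl h'
                  · exact Or.inr h'
                  · exact absurd h' (fun hh => hbx hh.symm)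
                  · exact absurd h' (fun hh => hax hh.symm)
                  · exact absurd h' (fun hh => hbx hh.symm)
                rcases hpab with hp' | hp' <;> rcases hqab with hq' | hq'
                · exfalso
                  rw [hp', hq'] at h
                  rw [AF.diag, Q.skew x a] at h
                  have := corr_neg_self (Q.1 a x)
                  omega
                · exact Or.inr (Or.inr (Or.inr (Or.inr (Or.inr (Or.inl ⟨hp', hq'⟩)))))
                · exact Or.inr (Or.inr (Or.inr (Or.inr (Or.inr (Or.inr ⟨hp', hq'⟩)))))
                · exfalso
                  rw [hp', hq'] at h
                  rw [AF.diag, Q.skew x b] at h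
                  have := corr_neg_self (Q.1 b x)
                  omega
    · rw [mut_id_of_row_zero (starInv_row_zero ⟨h1, h2⟩ hxV hxa hxb hxT)]
      exact ⟨h1, h2⟩

lemma starInv_change {V T : Set ℕ} {a b : ℕ} (haT : a ∉ T) (hbT : b ∉ T)
    {Q : AF ℕ} (hInv : StarInv V T a b Q) {x : ℕ} (hxT : x ∈ T) :
    (AF.mut x Q).1 a b ≠ Q.1 a b := by
  have hax : a ≠ x := fun h => haT (h ▸ hxT)
  have hbx : b ≠ x := fun h => hbT (h ▸ hxT)
  rw [mut_fst, mutateFun_ne _ _ hax hbx, (hInv.1 x hxT).2]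
  rcases (hInv.1 x hxT).1 with h | h <;> rw [h] <;> norm_num

end Case2
section Case2b

open Filter

lemma case2_div (i : ℕ → ℕ) (P : AF ℕ) (V : Set ℕ) (hVfin : V.Finite)
    (hall : ∀ u : ℕ, {n : ℕ | 1 ≤ n ∧ i n = u}.Finite) :
    ∃ Q', Q' ∈ Uset P V ∧ Q' ∉ CAF i := by
  classical
  obtain ⟨a, haV⟩ := hVfin.infinite_compl.nonempty
  obtain ⟨b, hb⟩ := (hVfin.insert a).infinite_compl.nonempty
  have haV : a ∉ V := haV
  have hbV : b ∉ V := fun h => hb (Set.mem_insert_of_mem a h)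
  have hab : a ≠ b := fun h => hb (h ▸ Set.mem_insert a V)
  obtain ⟨N, hN⟩ := ((hall a).union (hall b)).bddAbove
  have hNa : ∀ n, 1 ≤ n → i n = a → n ≤ N := fun n h1 h2 => hN (Or.inl ⟨h1, h2⟩)
  have hNb : ∀ n, 1 ≤ n → i n = b → n ≤ N := fun n h1 h2 => hN (Or.inr ⟨h1, h2⟩)
  set T : Set ℕ := {t | t ∉ V ∧ t ≠ a ∧ t ≠ b ∧ ∀ m, 1 ≤ m → m ≤ N → i m ≠ t}
    with hTdef
  have haT : a ∉ T := fun h => h.2.1 rfl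
  have hbT : b ∉ T := fun h => h.2.2.1 rfl
  have hTV : ∀ t, t ∈ T → t ∉ V := fun t ht => ht.1
  set stF : ℕ → ℕ → ℤ := starF T a b with hstF
  set st : AF ℕ := ⟨stF, starF_skew T a b⟩ with hstdef
  have hstv : ∀ p q, stF p q ≠ 0 →
      (p = a ∧ q ∈ T) ∨ (q = a ∧ p ∈ T) ∨ (p ∈ T ∧ q = b) ∨ (q ∈ T ∧ p = b) :=
    fun p q h => starF_vanish h
  have hsta : ∀ t, t ∈ T → stF a t = 1 := fun t ht => starF_at ht haT hab
  have hstb : ∀ t, t ∈ T → stF t b = 1 := fun t ht => starF_tb ht hbT hab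
  set Pt : AF ℕ := restrictAF V P with hPtdef
  have hPt : SuppIn V Pt := suppIn_restrictAF V P
  set R : AF ℕ := addAF (mutUpTo i Pt N) st with hRdef
  have hstzV : ∀ p q, p ∈ V ∨ q ∈ V → stF p q = 0 := by
    intro p q hpq
    by_contra hc
    rcases hstv p q hc with ⟨h1, h2⟩ | ⟨h1, h2⟩ | ⟨h1, h2⟩ | ⟨h1, h2⟩ <;>
      rcases hpq with hp | hp
    · exact haV (h1 ▸ hp)
    · exact hTV q h2 hp
    · exact hTV p h2 hp
    · exact haV (h1 ▸ hp)
    · exact hTV p h1 hp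
    · exact hbV (h2 ▸ hp)
    · exact hbV (h2 ▸ hp)
    · exact hTV q h1 hp
  have hSplitR : SplitAt V R := by
    intro p q h
    rw [hRdef, addAF_fst] at h
    by_cases hA : (mutUpTo i Pt N).1 p q = 0
    · rw [hA, zero_add] at h
      rcases hstv p q h with ⟨h1, h2⟩ | ⟨h1, h2⟩ | ⟨h1, h2⟩ | ⟨h1, h2⟩
      · exact Or.inr ⟨h1 ▸ haV, hTV q h2⟩
      · exact Or.inr ⟨hTV p h2, h1 ▸ haV⟩
      · exact Or.inr ⟨hTV p h1, h2 ▸ hbV⟩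
      · exact Or.inr ⟨h2 ▸ hbV, hTV q h1⟩
    · exact Or.inl (suppIn_mutUpTo hPt i N p q hA)
  set Q' := back i N R N with hQ'def
  have hSplitBack : ∀ j, SplitAt V (back i N R j) := by
    intro j
    induction j with
    | zero => exact hSplitR
    | succ j ih => exact splitAt_mut ih _
  have hrestr := pullback_restrict i V Pt hPt N R
    (by
      funext p q
      simp only [restrictFun]
      split_ifs with hpq
      · rw [hRdef, addAF_fst]
        show _ + stF p q = _
        rw [hstzV p q (Or.inl hpq.1), add_zero]
      · rfl)
    (fun j hj hxV => restrict_mut_of_split hxV (hSplitBack j))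
  have hQ'U : Q' ∈ Uset P V := by
    have h1 := hrestr N le_rfl
    rw [Nat.sub_self] at h1
    exact h1.trans (restrict_idem V P.1)
  refine ⟨Q', hQ'U, ?_⟩
  have hfwd : mutUpTo i Q' N = R := by
    have h1 := back_forward i N R N le_rfl
    rwa [Nat.sub_self] at h1
  have hInvR : StarInv V T a b R := by
    constructor
    · intro t ht
      have hAat : (mutUpTo i Pt N).1 a t = 0 := by
        by_contra hc; exact haV (suppIn_mutUpTo hPt i N a t hc).1
      have hAtb : (mutUpTo i Pt N).1 t b = 0 := by
        by_contra hc; exact hbV (suppIn_mutUpTo hPt i N t b hc).2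
      have e1 : R.1 a t = 1 := by
        rw [hRdef, addAF_fst, hAat, zero_add]
        exact hsta t ht
      have e2 : R.1 t b = 1 := by
        rw [hRdef, addAF_fst, hAtb, zero_add]
        exact hstb t ht
      rw [e1, e2]
      exact ⟨Or.inl rfl, rfl⟩
    · intro p q h
      rw [hRdef, addAF_fst] at h
      by_cases hA : (mutUpTo i Pt N).1 p q = 0
      · rw [hA, zero_add] at h
        rcases hstv p q h with ⟨h1, h2⟩ | ⟨h1, h2⟩ | ⟨h1, h2⟩ | ⟨h1, h2⟩
        · exact Or.inr (Or.inl ⟨h1, h2⟩)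
        · exact Or.inr (Or.inr (Or.inl ⟨h2, h1⟩))
        · exact Or.inr (Or.inr (Or.inr (Or.inl ⟨h1, h2⟩)))
        · exact Or.inr (Or.inr (Or.inr (Or.inr (Or.inl ⟨h2, h1⟩))))
      · exact Or.inl (suppIn_mutUpTo hPt i N p q hA)
  have hInvTraj : ∀ n, N ≤ n → StarInv V T a b (mutUpTo i Q' n) := by
    intro n hn
    induction n, hn using Nat.le_induction with
    | base => rw [hfwd]; exact hInvR
    | succ n hn ih =>
      have hxa : i (n+1) ≠ a := fun h => by
        have := hNa (n+1) (by omega) h; omega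
      have hxb : i (n+1) ≠ b := fun h => by
        have := hNb (n+1) (by omega) h; omega
      exact starInv_mut haV hbV hab haT hbT hTV ih hxa hxb
  have hXinf : {n : ℕ | N < n ∧ i n ∈ T}.Infinite := by
    by_contra hXfin
    rw [Set.not_infinite] at hXfin
    have hcover : {n : ℕ | N < n} ⊆ {n : ℕ | N < n ∧ i n ∈ T} ∪
        ⋃ u ∈ (V ∪ {a, b} ∪ i '' Set.Icc 1 N), {n : ℕ | 1 ≤ n ∧ i n = u} := by
      intro n hn
      have hn' : N < n := hn
      by_cases hT : i n ∈ T
      · exact Or.inl ⟨hn', hT⟩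
      · right
        refine Set.mem_biUnion ?_ (⟨by omega, rfl⟩ : n ∈ {m : ℕ | 1 ≤ m ∧ i m = i n})
        by_cases h1 : i n ∈ V
        · exact Or.inl (Or.inl h1)
        · by_cases h2 : i n = a
          · exact Or.inl (Or.inr (Or.inl h2))
          · by_cases h3 : i n = b
            · exact Or.inl (Or.inr (Or.inr h3))
            · right
              have hc : ¬(∀ m, 1 ≤ m → m ≤ N → i m ≠ i n) :=
                fun hcc => hT ⟨h1, h2, h3, hcc⟩
              push_neg at hc
              obtain ⟨m, hm1, hm2, hm3⟩ := hc
              exact ⟨m, ⟨hm1, hm2⟩, hm3⟩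
    have hfin2 : ({n : ℕ | N < n}).Finite :=
      (hXfin.union (((hVfin.union ((Set.finite_singleton b).insert a)).union
        ((Set.finite_Icc 1 N).image i)).biUnion (fun u _ => hall u))).subset hcover
    exact absurd hfin2 (Set.Ioi_infinite N)
  refine not_mem_CAF_of_flip a b ?_
  intro N₂
  obtain ⟨n, hn, hngt⟩ := hXinf.exists_gt (max N N₂)
  obtain ⟨m, rfl⟩ : ∃ m, n = m + 1 := ⟨n - 1, by omega⟩
  refine ⟨m, by omega, ?_⟩
  rw [mutUpTo_succ]
  exact starInv_change haT hbT (hInvTraj m (by omega)) hn.2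

end Case2b
/-- For any infinite mutation sequence: the domain of divergence is dense in `AF`;
if no vertex occurs infinitely often then the domain of convergence is dense;
if only finitely many vertices occur then the domain of convergence is not dense. -/
theorem af_infinite_mutation_sequences (i : ℕ → ℕ) :
    @Dense _ (weakTop ℕ) (CAF i)ᶜ ∧
    ((∀ v : ℕ, {n : ℕ | 1 ≤ n ∧ i n = v}.Finite) → @Dense _ (weakTop ℕ) (CAF i)) ∧
    ({v : ℕ | ∃ n : ℕ, 1 ≤ n ∧ i n = v}.Finite → ¬ @Dense _ (weakTop ℕ) (CAF i)) := by
  refine ⟨?_, part2_main i, part3_main i⟩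
  letI := weakTop ℕ
  rw [dense_iff_inter_open]
  intro U hU hne
  obtain ⟨x, hx⟩ := hne
  obtain ⟨V, hVfin, hsub⟩ := exists_basic hU x hx
  have hdiv : ∃ Q', Q' ∈ Uset x V ∧ Q' ∉ CAF i := by
    by_cases h1 : ∃ v, v ∉ V ∧ {n : ℕ | 1 ≤ n ∧ i n = v}.Infinite
    · obtain ⟨v, hvV, hvinf⟩ := h1
      exact case1_div i x V hVfin v hvV hvinf
    · by_cases h2 : ∃ v, {n : ℕ | 1 ≤ n ∧ i n = v}.Infinite
      · obtain ⟨v, hvinf⟩ := h2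
        push_neg at h1
        exact case3_div i x V hVfin
          (fun u hu => by_contra (fun huV => Set.not_infinite.mpr (h1 u huV) hu)) v hvinf
      · push_neg at h2
        exact case2_div i x V hVfin (fun u => h2 u)
  obtain ⟨Q', hQ'U, hQ'D⟩ := hdiv
  exact ⟨Q', hsub hQ'U, hQ'D⟩
end

section
/- Let i : ℕ → ℕ (indexed from 1) be an infinite sequence of vertices, let S_∞ := {v ∈ ℕ : {n : i_n = v} is infinite}, and let C_LF(μ_i) ⊆ LF be the set of locally finite quivers Q for which the sequence n ↦ μ_{i_n} ∘ ⋯ ∘ μ_{i_1}(Q) converges in the space LF, with D_LF(μ_i) its complement in LF. If S_∞ is nonempty, then C_LF(μ_i) is not dense in LF. If moreover S_∞ is infinite, then D_LF(μ_i) is dense in LF. -/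
/-- The space `LF`: locally finite quivers on `ℕ` as a subtype of `AF ℕ`. -/
abbrev LFsub := {Q : AF ℕ // Q ∈ LFset ℕ}

/-- The topology on `LF`: subspace topology inherited from the strong topology. -/
def LFtop : TopologicalSpace LFsub :=
  TopologicalSpace.induced (Subtype.val : LFsub → AF ℕ) (strongTop ℕ)

/-- The domain of convergence in `LF` of the infinite mutation sequence `μ_i`:
locally finite quivers whose mutation sequence converges in the strong topology to a
locally finite limit (equivalently, converges in the subspace `LF`). -/
def CLF (i : ℕ → ℕ) : Set LFsub :=
  {Q | ∃ L ∈ LFset ℕ,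
    Filter.Tendsto (fun n => mutUpTo i Q.1 n) Filter.atTop (@nhds _ (strongTop ℕ) L)}

/-! ### Auxiliary machinery -/

/-- The single-edge quiver from `v` to `w`. -/
def Efun (v w : ℕ) : ℕ → ℕ → ℤ :=
  fun a b => if a = v ∧ b = w then 1 else if a = w ∧ b = v then -1 else 0

lemma Efun_ne_zero {v w a b : ℕ} (h : Efun v w a b ≠ 0) :
    (a = v ∧ b = w) ∨ (a = w ∧ b = v) := by
  unfold Efun at h; split_ifs at h <;> tauto

lemma mut_at_v {v w : ℕ} (hvw : v ≠ w) (Q : AF ℕ) (c : ℤ)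
    (H : ∀ a b, (a = v ∨ a = w ∨ b = v ∨ b = w) → Q.1 a b = c * Efun v w a b) :
    ∀ a b, (a = v ∨ a = w ∨ b = v ∨ b = w) →
      (AF.mut v Q).1 a b = -c * Efun v w a b := by
  intro a b hab
  show mutateFun v Q.1 a b = _
  unfold mutateFun
  by_cases hax : a = v ∨ b = v
  · rw [if_pos hax, H a b hab]; ring
  · rw [if_neg hax]
    push_neg at hax
    obtain ⟨hav, hbv⟩ := hax
    have hQav : Q.1 a v = c * Efun v w a v := H a v (by tauto)
    have hQvb : Q.1 v b = c * Efun v w v b := H v b (by tauto)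
    by_cases haw : a = w
    · rw [show Efun v w a v = -1 by unfold Efun; split_ifs <;> omega] at hQav
      by_cases hbw : b = w
      · rw [show Efun v w v b = 1 by unfold Efun; split_ifs <;> omega] at hQvb
        have hQbb : Q.1 a b = 0 := by
          have heq : a = b := by omega
          have := Q.2 a b
          rw [heq] at this ⊢
          omega
        rw [hQbb, hQav, hQvb, show Efun v w a b = 0 by unfold Efun; split_ifs <;> omega]
        simp only [mul_one, mul_neg_one, neg_neg]
        ring
      · rw [show Efun v w v b = 0 by unfold Efun; split_ifs <;> omega] at hQvb
        rw [hQvb, H a b (by tauto), show Efun v w a b = 0 by unfold Efun; split_ifs <;> omega]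
        simp
    · have hbw : b = w := by tauto
      rw [show Efun v w a v = 0 by unfold Efun; split_ifs <;> omega] at hQav
      rw [hQav, H a b (by tauto), show Efun v w a b = 0 by unfold Efun; split_ifs <;> omega]
      simp

/-- Key invariance lemma: if a quiver agrees with `c • Efun v w` on all arrows touching
`{v, w}`, then after mutation at any vertex it agrees with `±c • Efun v w` on those arrows,
with the sign flipped exactly when mutating at `v` or `w`. -/
lemma mut_inv {v w : ℕ} (hvw : v ≠ w) (x : ℕ) (Q : AF ℕ) (c : ℤ)
    (H : ∀ a b, (a = v ∨ a = w ∨ b = v ∨ b = w) → Q.1 a b = c * Efun v w a b) :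
    ∀ a b, (a = v ∨ a = w ∨ b = v ∨ b = w) →
      (AF.mut x Q).1 a b = (if x = v ∨ x = w then -c else c) * Efun v w a b := by
  intro a b hab
  by_cases hx : x = v ∨ x = w
  · rw [if_pos hx]
    rcases hx with hxv | hxw
    · rw [hxv]; exact mut_at_v hvw Q c H a b hab
    · rw [hxw]
      have H' : ∀ a b, (a = w ∨ a = v ∨ b = w ∨ b = v) → Q.1 a b = (-c) * Efun w v a b := by
        intro a b h
        rw [H a b (by tauto), show Efun v w a b = - Efun w v a b by
          unfold Efun; split_ifs <;> omega]
        ring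
      rw [mut_at_v (Ne.symm hvw) Q (-c) H' a b (by tauto),
        show Efun w v a b = - Efun v w a b by unfold Efun; split_ifs <;> omega]
      ring
  · rw [if_neg hx]
    show mutateFun x Q.1 a b = _
    unfold mutateFun
    by_cases hax : a = x ∨ b = x
    · rw [if_pos hax, H a b hab]
      have hE : Efun v w a b = 0 := by
        by_contra h
        rcases Efun_ne_zero h with ⟨rfl, rfl⟩ | ⟨rfl, rfl⟩ <;> tauto
      rw [hE]; ring
    · rw [if_neg hax]
      have hEax : Efun v w a x = 0 := by
        by_contra h
        rcases Efun_ne_zero h with ⟨h1, h2⟩ | ⟨h1, h2⟩ <;> exact hx (by tauto)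
      have hExb : Efun v w x b = 0 := by
        by_contra h
        rcases Efun_ne_zero h with ⟨h1, h2⟩ | ⟨h1, h2⟩ <;> exact hx (by tauto)
      have hcorr : Q.1 a x = 0 ∨ Q.1 x b = 0 := by
        rcases hab with h | h | h | h
        · left; rw [H a x (by tauto), hEax]; ring
        · left; rw [H a x (by tauto), hEax]; ring
        · right; rw [H x b (by tauto), hExb]; ring
        · right; rw [H x b (by tauto), hExb]; ring
      rw [H a b hab]
      rcases hcorr with h0 | h0 <;> rw [h0] <;> simp

-- The sign of the edge quiver after `n` mutation steps.
open Classical in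
noncomputable def sgn (i : ℕ → ℕ) (v w : ℕ) : ℕ → ℤ
  | 0 => 1
  | n + 1 => if i (n + 1) = v ∨ i (n + 1) = w then -(sgn i v w n) else sgn i v w n

lemma sgn_pm (i : ℕ → ℕ) (v w : ℕ) : ∀ n, sgn i v w n = 1 ∨ sgn i v w n = -1 := by
  intro n
  induction n with
  | zero => left; rfl
  | succ n ih => rw [sgn]; split_ifs <;> omega

lemma mutUpTo_inv {v w : ℕ} (hvw : v ≠ w) (i : ℕ → ℕ) (Q : AF ℕ)
    (H : ∀ a b, (a = v ∨ a = w ∨ b = v ∨ b = w) → Q.1 a b = Efun v w a b) :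
    ∀ n a b, (a = v ∨ a = w ∨ b = v ∨ b = w) →
      (mutUpTo i Q n).1 a b = sgn i v w n * Efun v w a b := by
  intro n
  induction n with
  | zero =>
    intro a b hab
    show Q.1 a b = sgn i v w 0 * Efun v w a b
    rw [H a b hab, sgn]; ring
  | succ n ih =>
    intro a b hab
    show (AF.mut (i (n + 1)) (mutUpTo i Q n)).1 a b = _
    rw [mut_inv hvw (i (n + 1)) (mutUpTo i Q n) (sgn i v w n) ih a b hab, sgn]

/-- Divergence of the mutation sequence for quivers that look like the edge quiver
around `{v, w}`, when `v` is mutated infinitely often. -/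
lemma diverge {i : ℕ → ℕ} {v w : ℕ} (hvw : v ≠ w)
    (hv : {n : ℕ | 1 ≤ n ∧ i n = v}.Infinite)
    (Q : AF ℕ) (H : ∀ a b, (a = v ∨ a = w ∨ b = v ∨ b = w) → Q.1 a b = Efun v w a b) :
    ¬ ∃ L : AF ℕ, Filter.Tendsto (fun n => mutUpTo i Q n) Filter.atTop
      (@nhds _ (strongTop ℕ) L) := by
  rintro ⟨L, hT⟩
  letI : TopologicalSpace (AF ℕ) := strongTop ℕ
  have hopen : IsOpen (Wset L {v, w}) :=
    TopologicalSpace.isOpen_generateFrom_of_mem ⟨L, {v, w}, (Set.finite_singleton w).insert v, rfl⟩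
  have hmem : L ∈ Wset L {v, w} := rfl
  have hev := hT (hopen.mem_nhds hmem)
  rw [Filter.mem_map, Filter.mem_atTop_sets] at hev
  obtain ⟨N, hN⟩ := hev
  obtain ⟨m, hmS, hmN⟩ := hv.exists_notMem_finite (Set.finite_Iic N)
  obtain ⟨hm1, hmv⟩ := hmS
  have hmN' : N < m := by simpa using hmN
  have key : ∀ n, N ≤ n → (mutUpTo i Q n).1 v w = L.1 v w := by
    intro n hn
    have h1 : mutUpTo i Q n ∈ Wset L {v, w} := hN n hn
    have h2 := congrFun (congrFun h1 v) w
    simpa [overfillFun] using h2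
  have hvw' : ∀ n, (mutUpTo i Q n).1 v w = sgn i v w n := by
    intro n
    rw [mutUpTo_inv hvw i Q H n v w (by tauto),
      show Efun v w v w = 1 by unfold Efun; split_ifs <;> omega]
    ring
  obtain ⟨k, rfl⟩ : ∃ k, m = k + 1 := ⟨m - 1, by omega⟩
  have e1 : sgn i v w (k + 1) = L.1 v w := by rw [← hvw']; exact key _ (by omega)
  have e2 : sgn i v w k = L.1 v w := by rw [← hvw']; exact key _ (by omega)
  have e3 : sgn i v w (k + 1) = -(sgn i v w k) := by rw [sgn, if_pos (Or.inl hmv)]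
  rcases sgn_pm i v w k with h | h <;> omega

/-- Monotonicity of the basic sets `W_{Q,V}` in `V`. -/
lemma Wset_mono (Q : AF ℕ) {V V' : Set ℕ} (h : V ⊆ V') : Wset Q V' ⊆ Wset Q V := by
  intro Q' hQ'
  show overfillFun V Q'.1 = overfillFun V Q.1
  funext a b
  simp only [overfillFun]
  split_ifs with hc
  · have hc' : a ∈ V' ∨ b ∈ V' := hc.imp (fun ha => h ha) (fun hb => h hb)
    have := congrFun (congrFun (hQ' : overfillFun V' Q'.1 = overfillFun V' Q.1) a) b
    simpa [overfillFun, if_pos hc'] using this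
  · rfl

/-- Every strong-open set containing `Q` contains a basic set `W_{Q,V}` with `V` finite. -/
lemma open_basis : ∀ u : Set (AF ℕ), TopologicalSpace.GenerateOpen (WBasis ℕ) u →
    ∀ Q ∈ u, ∃ V : Set ℕ, V.Finite ∧ Wset Q V ⊆ u := by
  intro u h
  induction h with
  | basic s hs =>
    rintro Q hQ
    obtain ⟨Q₀, V, hVf, rfl⟩ := hs
    refine ⟨V, hVf, fun Q' hQ' => ?_⟩
    exact (hQ' : overfillFun V Q'.1 = overfillFun V Q.1).trans hQ
  | univ => exact fun Q _ => ⟨∅, Set.finite_empty, Set.subset_univ _⟩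
  | inter u₁ u₂ hu₁ hu₂ ih₁ ih₂ =>
    intro Q hQ
    obtain ⟨V₁, hf₁, hs₁⟩ := ih₁ Q hQ.1
    obtain ⟨V₂, hf₂, hs₂⟩ := ih₂ Q hQ.2
    exact ⟨V₁ ∪ V₂, hf₁.union hf₂,
      fun Q' h' => ⟨hs₁ (Wset_mono Q Set.subset_union_left h'),
        hs₂ (Wset_mono Q Set.subset_union_right h')⟩⟩
  | sUnion S hS ih =>
    intro Q hQ
    obtain ⟨t, htS, hQt⟩ := hQ
    obtain ⟨V, hV, hsub⟩ := ih t htS Q hQt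
    exact ⟨V, hV, hsub.trans (Set.subset_sUnion_of_mem htS)⟩

/-- If some vertex occurs infinitely often in `i`, the domain of convergence is not dense
in `LF`; if infinitely many vertices occur infinitely often, the domain of divergence is
dense in `LF`. -/
theorem lf_infinite_mutation_sequences (i : ℕ → ℕ) :
    ({v : ℕ | {n : ℕ | 1 ≤ n ∧ i n = v}.Infinite}.Nonempty →
      ¬ @Dense _ LFtop (CLF i)) ∧
    ({v : ℕ | {n : ℕ | 1 ≤ n ∧ i n = v}.Infinite}.Infinite →
      @Dense _ LFtop (CLF i)ᶜ) := by
  classical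
  letI : TopologicalSpace LFsub := LFtop
  constructor
  · -- Part 1: non-density of the domain of convergence
    rintro ⟨v, hv⟩ hD
    set w := v + 1 with hw
    have hvw : v ≠ w := by omega
    have hskew : ∀ a b, Efun v w a b = - Efun v w b a := by
      intro a b; unfold Efun; split_ifs <;> omega
    set EQ : AF ℕ := ⟨Efun v w, hskew⟩ with hEQ
    have hlf : EQ ∈ LFset ℕ := by
      intro x
      apply Set.Finite.subset ((Set.finite_singleton w).insert v)
      intro y hy
      rcases Efun_ne_zero hy with ⟨_, h2⟩ | ⟨_, h2⟩ <;> simp [h2]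
    have hP : (⟨EQ, hlf⟩ : LFsub) ∈ closure (CLF i) := hD ⟨EQ, hlf⟩
    rw [mem_closure_iff] at hP
    have hopen : IsOpen ((Subtype.val : LFsub → AF ℕ) ⁻¹' Wset EQ {v, w}) :=
      ⟨Wset EQ {v, w},
        TopologicalSpace.isOpen_generateFrom_of_mem
          ⟨EQ, {v, w}, (Set.finite_singleton w).insert v, rfl⟩, rfl⟩
    obtain ⟨Q', hQ'o, hQ'C⟩ := hP _ hopen rfl
    have H : ∀ a b, (a = v ∨ a = w ∨ b = v ∨ b = w) → Q'.1.1 a b = Efun v w a b := by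
      intro a b hab
      have hc : a ∈ ({v, w} : Set ℕ) ∨ b ∈ ({v, w} : Set ℕ) := by
        simp only [Set.mem_insert_iff, Set.mem_singleton_iff]; tauto
      have h2 := congrFun (congrFun
        (hQ'o : overfillFun {v, w} Q'.1.1 = overfillFun {v, w} EQ.1) a) b
      simpa only [overfillFun, if_pos hc] using h2
    obtain ⟨L, _, hT⟩ := hQ'C
    exact diverge hvw hv Q'.1 H ⟨L, hT⟩
  · -- Part 2: density of the domain of divergence
    intro hS
    intro P
    rw [mem_closure_iff]
    rintro o ho hPo
    obtain ⟨u, hu, rfl⟩ := ho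
    obtain ⟨V, hVf, hWsub⟩ := open_basis u hu P.1 hPo
    have hTf : (V ∪ ⋃ a ∈ V, {y | P.1.1 a y ≠ 0}).Finite :=
      hVf.union (hVf.biUnion fun a _ => P.2 a)
    obtain ⟨v, hvS, hvT⟩ := (hS.diff hTf).nonempty
    obtain ⟨w, hwmem⟩ := ((hS.diff hTf).diff (Set.finite_singleton v)).nonempty
    obtain ⟨⟨hwS, hwT⟩, hwv⟩ := hwmem
    have hvw : v ≠ w := fun h => hwv (by simp [h])
    have hvV : v ∉ V := fun h => hvT (Or.inl h)
    have hwV : w ∉ V := fun h => hwT (Or.inl h)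
    have hrow_v : ∀ a ∈ V, P.1.1 a v = 0 := by
      intro a ha
      by_contra h
      exact hvT (Or.inr (Set.mem_biUnion ha h))
    have hrow_w : ∀ a ∈ V, P.1.1 a w = 0 := by
      intro a ha
      by_contra h
      exact hwT (Or.inr (Set.mem_biUnion ha h))
    have hskew : ∀ a b, (if a ∈ V ∨ b ∈ V then P.1.1 a b else Efun v w a b)
        = - (if b ∈ V ∨ a ∈ V then P.1.1 b a else Efun v w b a) := by
      intro a b
      by_cases h : a ∈ V ∨ b ∈ V
      · rw [if_pos h, if_pos (Or.symm h)]; exact P.1.2 a b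
      · rw [if_neg h, if_neg (fun hh => h (Or.symm hh))]
        unfold Efun; split_ifs <;> omega
    set QA : AF ℕ := ⟨fun a b => if a ∈ V ∨ b ∈ V then P.1.1 a b else Efun v w a b,
      fun a b => hskew a b⟩ with hQA
    have hQAval : ∀ a b, QA.1 a b = if a ∈ V ∨ b ∈ V then P.1.1 a b else Efun v w a b :=
      fun a b => rfl
    have hQAlf : QA ∈ LFset ℕ := by
      intro x
      apply Set.Finite.subset ((P.2 x).union ((Set.finite_singleton w).insert v))
      intro y hy
      have hy' : QA.1 x y ≠ 0 := hy
      rw [hQAval] at hy'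
      split_ifs at hy' with h
      · exact Or.inl hy'
      · rcases Efun_ne_zero hy' with ⟨_, h2⟩ | ⟨_, h2⟩ <;> simp [h2]
    have hWmem : QA ∈ Wset P.1 V := by
      show overfillFun V QA.1 = overfillFun V P.1.1
      funext a b
      simp only [overfillFun]
      split_ifs with h
      · rw [hQAval, if_pos h]
      · rfl
    have H : ∀ a b, (a = v ∨ a = w ∨ b = v ∨ b = w) → QA.1 a b = Efun v w a b := by
      intro a b hab
      rw [hQAval]
      split_ifs with h
      · have hE0 : Efun v w a b = 0 := by
          by_contra hh
          rcases Efun_ne_zero hh with ⟨h1, h2⟩ | ⟨h1, h2⟩ <;> rcases h with h | h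
          · exact hvV (h1 ▸ h)
          · exact hwV (h2 ▸ h)
          · exact hwV (h1 ▸ h)
          · exact hvV (h2 ▸ h)
        rw [hE0]
        rcases h with h | h
        · have hb : b = v ∨ b = w := by
            rcases hab with h1 | h1 | h1 | h1
            · exact absurd (h1 ▸ h) hvV
            · exact absurd (h1 ▸ h) hwV
            · exact Or.inl h1
            · exact Or.inr h1
          rcases hb with h1 | h1 <;> rw [h1]
          · exact hrow_v a h
          · exact hrow_w a h
        · have ha : a = v ∨ a = w := by
            rcases hab with h1 | h1 | h1 | h1
            · exact Or.inl h1
            · exact Or.inr h1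
            · exact absurd (h1 ▸ h) hvV
            · exact absurd (h1 ▸ h) hwV
          have hba : P.1.1 b a = 0 := by
            rcases ha with h1 | h1 <;> rw [h1]
            · exact hrow_v b h
            · exact hrow_w b h
          rw [P.1.2 a b, hba, neg_zero]
      · rfl
    refine ⟨⟨QA, hQAlf⟩, hWsub hWmem, ?_⟩
    rintro ⟨L, _, hT⟩
    exact diverge hvw hvS QA H ⟨L, hT⟩
end

section
/- Let Fin ⊆ AF be the subspace of finite quivers on ℕ with the subspace weak topology, and let ∼ be the equivalence relation on Fin where Q ∼ Q' iff Q' can be obtained from Q by applying a finite sequence of mutations followed by an isomorphism; give Fin/∼ the quotient topology. Let M' be the set of equivalence classes of abstract finite quivers (skew-symmetric functions {0,…,n-1} × {0,…,n-1} → ℤ, over all n ≥ 1) under mutation-equivalence and isomorphism, restricted to those classes represented by a quiver that either has no isolated vertices or is the one-vertex quiver; partially order M' by setting [P] ⪯ [R] iff P embeds as a full subquiver into some representative of [R], and give M' the Alexandrov topology whose open sets are the upward-closed sets. Then Fin/∼ is homeomorphic to M' via the map sending the class of Q ∈ Fin to the class of the restriction of Q to its support supp(Q) if supp(Q) ≠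 ∅, and to the class of the one-vertex quiver if Q has no arrows. -/
/-- Apply a finite sequence of mutations, leftmost entry first:
`mutList Q [x₁, …, x_k] = μ_{x_k} ∘ ⋯ ∘ μ_{x_1} (Q)`. -/
noncomputable def mutList {X : Type*} (Q : AF X) (l : List X) : AF X :=
  l.foldl (fun R x => AF.mut x R) Q

/-- Two quivers on `X` are isomorphic if a relabeling of vertices carries one to the other. -/
def IsoAF {X : Type*} (Q Q' : AF X) : Prop :=
  ∃ f : X ≃ X, ∀ a b, Q'.1 (f a) (f b) = Q.1 a b

/-- The subspace `Fin ⊆ AF` of finite quivers on `ℕ`. -/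
abbrev FinT := {Q : AF ℕ // Q ∈ FinSet ℕ}

/-- `Q ∼ Q'` iff `Q'` is obtained from `Q` by a finite mutation sequence followed by an
isomorphism (a relabeling of the vertices). -/
def finRel (Q Q' : FinT) : Prop := ∃ l : List ℕ, IsoAF (mutList Q.1 l) Q'.1

/-- The subspace weak topology on `Fin`. -/
instance : TopologicalSpace FinT :=
  TopologicalSpace.induced (Subtype.val : FinT → AF ℕ) (weakTop ℕ)

/-- The quotient topology on `Fin/∼` induced from the subspace weak topology on `Fin`. -/
instance finQuotTop : TopologicalSpace (Quot finRel) :=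
  TopologicalSpace.coinduced (Quot.mk finRel) inferInstance

/-- Abstract finite quivers: skew-symmetric functions on `{0, …, n}` over all `n`,
i.e. with at least one vertex. -/
abbrev AbsQ := Σ n : ℕ, AF (Fin (n + 1))

/-- Mutation-equivalence combined with isomorphism on abstract finite quivers. -/
def absEquiv (P R : AbsQ) : Prop :=
  ∃ (l : List (Fin (P.1 + 1))) (f : Fin (P.1 + 1) → Fin (R.1 + 1)),
    Function.Bijective f ∧ ∀ a b, R.2.1 (f a) (f b) = (mutList P.2 l).1 a b

/-- `P` embeds into `S` as a full subquiver. -/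
def embedsAbs (P S : AbsQ) : Prop :=
  ∃ f : Fin (P.1 + 1) → Fin (S.1 + 1), Function.Injective f ∧
    ∀ a b, S.2.1 (f a) (f b) = P.2.1 a b

/-- Either there are no isolated vertices, or it is the one-vertex quiver. -/
def GoodAbs (P : AbsQ) : Prop := (∀ a, ∃ b, P.2.1 a b ≠ 0) ∨ P.1 = 0

abbrev GoodQ := {P : AbsQ // GoodAbs P}

def relG (P R : GoodQ) : Prop := absEquiv P.1 R.1

/-- The mutation class space `M'`. -/
abbrev Msp := Quot relG

/-- `[P] ⪯ [R]` on representatives: `P` embeds as a full subquiver into some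
representative of the class of `R`. -/
def preRel (P R : GoodQ) : Prop := ∃ S : AbsQ, absEquiv R.1 S ∧ embedsAbs P.1 S

/-- The Alexandrov topology on `M'`: open sets are the upward-closed sets for `⪯`. -/
instance MTop : TopologicalSpace Msp where
  IsOpen O := ∀ P R : GoodQ, preRel P R → Quot.mk relG P ∈ O → Quot.mk relG R ∈ O
  isOpen_univ := fun _ _ _ _ => trivial
  isOpen_inter := fun s t hs ht P R h hm => ⟨hs P R h hm.1, ht P R h hm.2⟩
  isOpen_sUnion := fun S hS P R h hm => by
    obtain ⟨t, htS, hmt⟩ := hm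
    exact ⟨t, htS, hS t htS P R h hmt⟩

/-! ### Auxiliary development -/

namespace MutAux

open Function Set

variable {X Y Z : Type*}

/-- Support of a skew-symmetric integer matrix. -/
def suppS (Q : X → X → ℤ) : Set X := {x | ∃ y, Q x y ≠ 0}

lemma AF.diag (Q : AF X) (a : X) : Q.1 a a = 0 := by
  have := Q.2 a a; omega

lemma zero_left {Q : AF X} {x : X} (hx : x ∉ suppS Q.1) (y : X) : Q.1 x y = 0 := by
  by_contra h
  exact hx ⟨y, h⟩

lemma zero_right {Q : AF X} {y : X} (hy : y ∉ suppS Q.1) (x : X) : Q.1 x y = 0 := by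
  rw [Q.2]
  simp [zero_left hy]

lemma mem_supp_symm {Q : AF X} {x y : X} (h : Q.1 x y ≠ 0) : y ∈ suppS Q.1 := by
  refine ⟨x, fun h0 => h ?_⟩
  rw [Q.2, h0, neg_zero]

lemma supp_no_singleton {Q : AF X} {x : X} (hx : x ∈ suppS Q.1) :
    ∃ y ∈ suppS Q.1, y ≠ x := by
  obtain ⟨y, hy⟩ := hx
  refine ⟨y, mem_supp_symm hy, fun hyx => ?_⟩
  subst hyx
  exact hy (AF.diag Q y)

/-- Pullback of a quiver along a map. -/
def AF.comap (f : X → Y) (Q : AF Y) : AF X :=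
  ⟨fun a b => Q.1 (f a) (f b), fun a b => Q.2 _ _⟩

lemma mutateFun_comp (f : X → Y) (hf : Injective f) (Q : Y → Y → ℤ) (x a b : X) :
    mutateFun (f x) Q (f a) (f b) = mutateFun x (fun a b => Q (f a) (f b)) a b := by
  simp only [mutateFun]
  by_cases h : a = x ∨ b = x
  · rw [if_pos h, if_pos (by rwa [hf.eq_iff, hf.eq_iff])]
  · rw [if_neg h, if_neg (by rwa [hf.eq_iff, hf.eq_iff])]

lemma AF.mut_comap {f : X → Y} (hf : Injective f) (x : X) (Q : AF Y) :
    AF.comap f (AF.mut (f x) Q) = AF.mut x (AF.comap f Q) := by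
  apply Subtype.ext
  funext a b
  exact mutateFun_comp f hf Q.1 x a b

lemma mutList_cons (Q : AF X) (x : X) (l : List X) :
    mutList Q (x :: l) = mutList (AF.mut x Q) l := rfl

lemma mutList_append (Q : AF X) (l₁ l₂ : List X) :
    mutList Q (l₁ ++ l₂) = mutList (mutList Q l₁) l₂ :=
  List.foldl_append

lemma mutList_comap {f : X → Y} (hf : Injective f) (l : List X) (Q : AF Y) :
    AF.comap f (mutList Q (l.map f)) = mutList (AF.comap f Q) l := by
  induction l generalizing Q with
  | nil => rfl
  | cons x t ih =>
    rw [List.map_cons, mutList_cons, mutList_cons, ← AF.mut_comap hf, ih]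

lemma mut_eq_of_isolated {Q : AF X} {x : X} (hx : x ∉ suppS Q.1) : AF.mut x Q = Q := by
  apply Subtype.ext
  funext v w
  simp only [AF.mut, mutateFun]
  split
  · rename_i h
    rcases h with h | h
    · subst h; rw [zero_left hx, neg_zero]
    · subst h; rw [zero_right hx, neg_zero]
  · rw [zero_right hx v, zero_left hx w]
    simp

lemma isolated_mut_iff {Q : AF X} {x a : X} :
    (∀ b, Q.1 a b = 0) ↔ (∀ b, (AF.mut x Q).1 a b = 0) := by
  constructor
  · intro h b
    simp only [AF.mut, mutateFun]
    split
    · rw [h b, neg_zero]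
    · rw [h b, h x]
      simp
  · intro h
    have hax : Q.1 a x = 0 := by
      by_cases hxx : a = x
      · subst hxx; exact AF.diag Q a
      · have := h x
        simp only [AF.mut, mutateFun, if_pos (Or.inr rfl)] at this
        omega
    intro b
    by_cases hab : a = x ∨ b = x
    · have := h b
      simp only [AF.mut, mutateFun, if_pos hab] at this
      omega
    · have := h b
      simp only [AF.mut, mutateFun, if_neg hab, hax] at this
      simpa using this

lemma supp_mut (x : X) (Q : AF X) : suppS (AF.mut x Q).1 = suppS Q.1 := by
  ext a
  simp only [suppS, mem_setOf_eq]
  rw [← not_iff_not]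
  push_neg
  exact isolated_mut_iff.symm

lemma supp_mutList (Q : AF X) (l : List X) : suppS (mutList Q l).1 = suppS Q.1 := by
  induction l generalizing Q with
  | nil => rfl
  | cons x t ih => rw [mutList_cons, ih, supp_mut]

lemma mut_mut (x : X) (Q : AF X) : AF.mut x (AF.mut x Q) = Q := by
  apply Subtype.ext
  funext v w
  simp only [AF.mut, mutateFun]
  by_cases h : v = x ∨ w = x
  · rw [if_pos h, if_pos h, neg_neg]
  · simp only [if_neg h, if_pos (show v = x ∨ x = x from Or.inr rfl),
      if_pos (show x = x ∨ w = x from Or.inl rfl), neg_neg]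
    set A := Q.1 v x with hA
    set B := Q.1 x w with hB
    have h1 : ∀ t : ℤ, max t 0 - max (-t) 0 = t := by
      intro t
      rcases le_total 0 t with h | h
      · rw [max_eq_left h, max_eq_right (by omega : -t ≤ 0)]; ring
      · rw [max_eq_right h, max_eq_left (by omega : (0:ℤ) ≤ -t)]; ring
    have h2 := h1 A
    have h3 := h1 B
    linear_combination A * h3 - B * h2

lemma mutList_reverse (Q : AF X) (l : List X) : mutList (mutList Q l) l.reverse = Q := by
  induction l generalizing Q with
  | nil => rfl
  | cons x t ih =>
    rw [mutList_cons, List.reverse_cons, mutList_append, ih]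
    show AF.mut x (AF.mut x Q) = Q
    exact mut_mut x Q

end MutAux

namespace MutAux
open Function Set

variable {X Y : Type*}

lemma AF.ext2 {Q Q' : AF X} (h : ∀ a b, Q.1 a b = Q'.1 a b) : Q = Q' :=
  Subtype.ext (funext fun a => funext fun b => h a b)

lemma absEquiv_refl (P : AbsQ) : absEquiv P P :=
  ⟨[], id, Function.bijective_id, fun _ _ => rfl⟩

lemma absEquiv_symm {P R : AbsQ} (h : absEquiv P R) : absEquiv R P := by
  obtain ⟨l, f, hf, h⟩ := h
  have hcom : AF.comap f R.2 = mutList P.2 l := AF.ext2 h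
  let e := Equiv.ofBijective f hf
  refine ⟨l.reverse.map f, e.symm, e.symm.bijective, ?_⟩
  have key : AF.comap f (mutList R.2 (l.reverse.map f)) = P.2 := by
    rw [mutList_comap hf.injective, hcom, mutList_reverse]
  intro a b
  have h1 : (mutList R.2 (l.reverse.map f)).1 (f (e.symm a)) (f (e.symm b)) =
      P.2.1 (e.symm a) (e.symm b) := by
    rw [← key]; rfl
  have h2 : f (e.symm a) = a := e.apply_symm_apply a
  have h3 : f (e.symm b) = b := e.apply_symm_apply b
  rw [h2, h3] at h1
  exact h1.symm

lemma absEquiv_trans {P R S : AbsQ} (h1 : absEquiv P R) (h2 : absEquiv R S) :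
    absEquiv P S := by
  obtain ⟨l, f, hf, h⟩ := h1
  obtain ⟨m, g, hg, k⟩ := h2
  let e := Equiv.ofBijective f hf
  refine ⟨l ++ m.map e.symm, g ∘ f, hg.comp hf, ?_⟩
  have hmm : (m.map e.symm).map f = m := by
    rw [List.map_map]
    have hid : (f ∘ (e.symm : Fin (R.1+1) → Fin (P.1+1))) = id :=
      funext fun x => e.apply_symm_apply x
    rw [hid, List.map_id]
  intro a b
  rw [mutList_append]
  have hcf : AF.comap f R.2 = mutList P.2 l := AF.ext2 h
  have hco := mutList_comap hf.injective (m.map e.symm) R.2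
  rw [hmm, hcf] at hco
  have hk : (mutList R.2 m).1 (f a) (f b) =
      (mutList (mutList P.2 l) (m.map e.symm)).1 a b := by
    rw [← hco]; rfl
  rw [← hk]
  exact k (f a) (f b)

lemma relG_equivalence : Equivalence relG :=
  ⟨fun P => absEquiv_refl P.1, fun h => absEquiv_symm h, fun h k => absEquiv_trans h k⟩

lemma absEquiv_dim {P R : AbsQ} (h : absEquiv P R) : P.1 = R.1 := by
  obtain ⟨l, f, hf, -⟩ := h
  have := Fintype.card_of_bijective hf
  simp only [Fintype.card_fin] at this
  omega

lemma absEquiv_of_dim_zero {P R : AbsQ} (hP : P.1 = 0) (hR : R.1 = 0) : absEquiv P R := by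
  refine ⟨[], fun a => ⟨a.1, by omega⟩,
    ⟨fun a b hab => by ext; simpa using congrArg Fin.val hab,
     fun b => ⟨⟨b.1, by omega⟩, by ext; rfl⟩⟩, ?_⟩
  intro a b
  have hab : a = b := by ext; have := a.isLt; have := b.isLt; omega
  subst hab
  show R.2.1 _ _ = P.2.1 a a
  rw [AF.diag, AF.diag]

lemma good_of_absEquiv {P R : AbsQ} (h : absEquiv P R) (hP : GoodAbs P) : GoodAbs R := by
  rcases hP with hni | h0
  · left
    obtain ⟨l, f, hf, hval⟩ := h
    intro s
    obtain ⟨a, rfl⟩ := hf.2 s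
    have ha : a ∈ suppS (mutList P.2 l).1 := by
      rw [supp_mutList]; exact hni a
    obtain ⟨b, hb⟩ := ha
    exact ⟨f b, by rw [hval]; exact hb⟩
  · right; rw [← absEquiv_dim h]; exact h0

/-- The specification from the theorem statement. -/
def spec (Q : FinT) (P : GoodQ) : Prop :=
  (∃ f : Fin (P.1.1 + 1) → ℕ, Function.Injective f ∧
      Set.range f = suppS Q.1.1 ∧
      ∀ a b, Q.1.1 (f a) (f b) = P.1.2.1 a b) ∨
    (suppS Q.1.1 = ∅ ∧ P.1.1 = 0)

def ptAbs : AbsQ := ⟨0, ⟨fun _ _ => 0, fun _ _ => by ring⟩⟩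

def ptGood : GoodQ := ⟨ptAbs, Or.inr rfl⟩

lemma spec_exists (Q : FinT) : ∃ P : GoodQ, spec Q P := by
  by_cases hs : suppS Q.1.1 = ∅
  · exact ⟨ptGood, Or.inr ⟨hs, rfl⟩⟩
  · have hfin : (suppS Q.1.1).Finite := Q.2
    set s := hfin.toFinset with hsdef
    have hs0 : s.Nonempty := by
      rw [Set.Finite.toFinset_nonempty]
      exact Set.nonempty_iff_ne_empty.mpr hs
    have hcard : s.card = (s.card - 1) + 1 :=
      (Nat.succ_pred_eq_of_pos (Finset.card_pos.mpr hs0)).symm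
    let eo := s.orderIsoOfFin hcard
    let f : Fin (s.card - 1 + 1) → ℕ := fun a => (eo a : ℕ)
    have hfinj : Function.Injective f := fun a b hab => eo.injective (Subtype.ext hab)
    have hrange : Set.range f = suppS Q.1.1 := by
      ext x
      constructor
      · rintro ⟨a, rfl⟩
        exact (Set.Finite.mem_toFinset hfin).mp (eo a).2
      · intro hx
        have hxs : x ∈ s := (Set.Finite.mem_toFinset hfin).mpr hx
        refine ⟨eo.symm ⟨x, hxs⟩, ?_⟩
        show ((eo (eo.symm ⟨x, hxs⟩)) : ℕ) = x
        rw [OrderIso.apply_symm_apply]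
    refine ⟨⟨⟨s.card - 1, AF.comap f Q.1⟩, Or.inl ?_⟩, Or.inl ⟨f, hfinj, hrange, fun a b => rfl⟩⟩
    intro a
    have hfa : f a ∈ suppS Q.1.1 := hrange ▸ Set.mem_range_self a
    obtain ⟨y, hy⟩ := hfa
    have hy' : y ∈ suppS Q.1.1 := mem_supp_symm hy
    obtain ⟨b, hb⟩ : y ∈ Set.range f := hrange.symm ▸ hy'
    refine ⟨b, ?_⟩
    show Q.1.1 (f a) (f b) ≠ 0
    rw [hb]
    exact hy

lemma spec_unique {Q : FinT} {P P' : GoodQ} (h : spec Q P) (h' : spec Q P') : relG P P' := by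
  rcases h with ⟨f, hf, hr, hv⟩ | ⟨he, h0⟩
  · rcases h' with ⟨f', hf', hr', hv'⟩ | ⟨he', h0'⟩
    · have hsub : ∀ a : Fin (P.1.1+1), f a ∈ Set.range f' := fun a => by
        rw [hr', ← hr]; exact Set.mem_range_self a
      let g : Fin (P.1.1+1) → Fin (P'.1.1+1) :=
        fun a => (Equiv.ofInjective f' hf').symm ⟨f a, hsub a⟩
      have hg : ∀ a, f' (g a) = f a := fun a => Equiv.apply_ofInjective_symm hf' _
      have hginj : Function.Injective g := by
        intro a b hab
        apply hf
        rw [← hg a, ← hg b, hab]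
      have hgsurj : Function.Surjective g := by
        intro b
        have hb : f' b ∈ Set.range f := by rw [hr, ← hr']; exact Set.mem_range_self b
        obtain ⟨a, ha⟩ := hb
        exact ⟨a, hf' (by rw [hg a, ha])⟩
      refine ⟨[], g, ⟨hginj, hgsurj⟩, ?_⟩
      intro a b
      show P'.1.2.1 (g a) (g b) = P.1.2.1 a b
      rw [← hv' (g a) (g b), hg a, hg b, hv a b]
    · exfalso
      have hmem : f 0 ∈ suppS Q.1.1 := hr ▸ Set.mem_range_self 0
      rw [he'] at hmem
      exact Set.notMem_empty _ hmem
  · rcases h' with ⟨f', hf', hr', hv'⟩ | ⟨he', h0'⟩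
    · exfalso
      have hmem : f' 0 ∈ suppS Q.1.1 := hr' ▸ Set.mem_range_self 0
      rw [he] at hmem
      exact Set.notMem_empty _ hmem
    · exact absEquiv_of_dim_zero h0 h0'

lemma exists_comap_list (Q : AF ℕ) {n : ℕ} (f : Fin n → ℕ) (hf : Injective f)
    (hrange : Set.range f = suppS Q.1) (l : List ℕ) :
    ∃ m : List (Fin n), AF.comap f (mutList Q l) = mutList (AF.comap f Q) m := by
  induction l generalizing Q with
  | nil => exact ⟨[], rfl⟩
  | cons x t ih =>
    rw [mutList_cons]
    by_cases hx : x ∈ suppS Q.1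
    · obtain ⟨a, rfl⟩ : x ∈ Set.range f := hrange.symm ▸ hx
      have hr2 : Set.range f = suppS (AF.mut (f a) Q).1 := by rw [supp_mut]; exact hrange
      obtain ⟨m, hm⟩ := ih (AF.mut (f a) Q) hr2
      refine ⟨a :: m, ?_⟩
      rw [hm, mutList_cons, AF.mut_comap hf]
    · rw [mut_eq_of_isolated hx]
      exact ih Q hrange

lemma supp_iso {Q Q' : AF ℕ} {e : ℕ ≃ ℕ} (h : ∀ a b, Q'.1 (e a) (e b) = Q.1 a b) :
    suppS Q'.1 = e '' suppS Q.1 := by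
  ext x
  constructor
  · rintro ⟨y, hy⟩
    have hne : Q.1 (e.symm x) (e.symm y) ≠ 0 := by
      rw [← h (e.symm x) (e.symm y), e.apply_symm_apply, e.apply_symm_apply]
      exact hy
    exact ⟨e.symm x, ⟨e.symm y, hne⟩, e.apply_symm_apply x⟩
  · rintro ⟨a, ⟨b, hb⟩, rfl⟩
    exact ⟨e b, by rw [h]; exact hb⟩

lemma eq_zero_of_supp_empty {Q : AF X} (h : suppS Q.1 = ∅) (x y : X) : Q.1 x y = 0 :=
  zero_left (h ▸ Set.notMem_empty x) y

lemma mutList_eq_of_supp_empty {Q : AF X} (h : suppS Q.1 = ∅) (l : List X) :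
    mutList Q l = Q := by
  induction l generalizing Q with
  | nil => rfl
  | cons x t ih =>
    rw [mutList_cons, mut_eq_of_isolated (h ▸ Set.notMem_empty x), ih h]

lemma spec_invariant {Q Q' : FinT} (hrel : finRel Q Q') {P P' : GoodQ}
    (h : spec Q P) (h' : spec Q' P') : relG P P' := by
  obtain ⟨l, e, he⟩ := hrel
  by_cases hs : suppS Q.1.1 = ∅
  · have hml : mutList Q.1 l = Q.1 := mutList_eq_of_supp_empty hs l
    rw [hml] at he
    have hQ'0 : suppS Q'.1.1 = ∅ := by
      rw [supp_iso he, hs, Set.image_empty]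
    rcases h with ⟨f, hf, hr, hv⟩ | ⟨-, h0⟩
    · exact absurd (hr ▸ Set.mem_range_self 0) (hs ▸ Set.notMem_empty _)
    rcases h' with ⟨f', hf', hr', hv'⟩ | ⟨-, h0'⟩
    · exact absurd (hr' ▸ Set.mem_range_self 0) (hQ'0 ▸ Set.notMem_empty _)
    exact absEquiv_of_dim_zero h0 h0'
  · rcases h with ⟨f, hf, hr, hv⟩ | ⟨he0, -⟩
    swap
    · exact absurd he0 hs
    obtain ⟨m, hm⟩ := exists_comap_list Q.1 f hf hr l
    have hcomap : AF.comap f Q.1 = P.1.2 := AF.ext2 hv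
    rw [hcomap] at hm
    have hsupp' : suppS Q'.1.1 = e '' suppS Q.1.1 := by
      rw [supp_iso he, supp_mutList]
    have hs' : suppS Q'.1.1 ≠ ∅ := by
      rw [hsupp']
      intro hemp
      exact hs (Set.image_eq_empty.mp hemp)
    rcases h' with ⟨f', hf', hr', hv'⟩ | ⟨he0', -⟩
    swap
    · exact absurd he0' hs'
    have hmem : ∀ a : Fin (P.1.1+1), e (f a) ∈ Set.range f' := by
      intro a
      rw [hr', hsupp']
      exact ⟨f a, hr ▸ Set.mem_range_self a, rfl⟩
    let g : Fin (P.1.1+1) → Fin (P'.1.1+1) :=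
      fun a => (Equiv.ofInjective f' hf').symm ⟨e (f a), hmem a⟩
    have hg : ∀ a, f' (g a) = e (f a) := fun a => Equiv.apply_ofInjective_symm hf' _
    have hginj : Injective g := fun a b hab => hf (e.injective (by rw [← hg a, ← hg b, hab]))
    have hgsurj : Surjective g := by
      intro b
      have hb : f' b ∈ e '' suppS Q.1.1 := by
        rw [← hsupp', ← hr']; exact Set.mem_range_self b
      obtain ⟨x, hx, hex⟩ := hb
      obtain ⟨a, rfl⟩ : x ∈ Set.range f := hr.symm ▸ hx
      exact ⟨a, hf' (by rw [hg a, hex])⟩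
    refine ⟨m, g, ⟨hginj, hgsurj⟩, ?_⟩
    intro a b
    have h1 : P'.1.2.1 (g a) (g b) = Q'.1.1 (f' (g a)) (f' (g b)) := (hv' (g a) (g b)).symm
    rw [h1, hg a, hg b, he (f a) (f b)]
    show (AF.comap f (mutList Q.1 l)).1 a b = _
    rw [hm]

lemma exists_extension {s t : Set ℕ} (hs : s.Finite) (ht : t.Finite) (σ : ℕ → ℕ)
    (hσ : Set.BijOn σ s t) :
    ∃ e : ℕ ≃ ℕ, (∀ x ∈ s, e x = σ x) ∧ ∀ x, x ∉ s → e x ∉ t := by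
  classical
  haveI : Infinite ↥sᶜ := (hs.infinite_compl).to_subtype
  haveI : Infinite ↥tᶜ := (ht.infinite_compl).to_subtype
  obtain ⟨d1⟩ := nonempty_denumerable ↥sᶜ
  obtain ⟨d2⟩ := nonempty_denumerable ↥tᶜ
  let e2 : ↥sᶜ ≃ ↥tᶜ := (@Denumerable.eqv _ d1).trans (@Denumerable.eqv _ d2).symm
  let e1 : ↥s ≃ ↥t := Set.BijOn.equiv σ hσ
  let e : ℕ ≃ ℕ := (Equiv.Set.sumCompl s).symm.trans ((e1.sumCongr e2).trans (Equiv.Set.sumCompl t))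
  refine ⟨e, ?_, ?_⟩
  · intro x hx
    show (Equiv.Set.sumCompl t) ((e1.sumCongr e2) ((Equiv.Set.sumCompl s).symm x)) = σ x
    rw [Equiv.Set.sumCompl_symm_apply_of_mem hx]
    show (Equiv.Set.sumCompl t) (Sum.inl (e1 ⟨x, hx⟩)) = σ x
    rw [Equiv.Set.sumCompl_apply_inl]
    rfl
  · intro x hx
    show (Equiv.Set.sumCompl t) ((e1.sumCongr e2) ((Equiv.Set.sumCompl s).symm x)) ∉ t
    rw [Equiv.Set.sumCompl_symm_apply_of_notMem hx]
    show (Equiv.Set.sumCompl t) (Sum.inr (e2 ⟨x, hx⟩)) ∉ t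
    rw [Equiv.Set.sumCompl_apply_inr]
    exact (e2 ⟨x, hx⟩).2

lemma finRel_of_relG {Q Q' : FinT} {P P' : GoodQ} (h : spec Q P) (h' : spec Q' P')
    (hrel : relG P P') : finRel Q Q' := by
  by_cases hs : suppS Q.1.1 = ∅
  · rcases h with ⟨f, hf, hr, hv⟩ | ⟨-, h0⟩
    · exact absurd (hr ▸ Set.mem_range_self 0) (hs ▸ Set.notMem_empty _)
    have hdim : P'.1.1 = 0 := by rw [← absEquiv_dim hrel]; exact h0
    have hs' : suppS Q'.1.1 = ∅ := by
      rcases h' with ⟨f', hf', hr', hv'⟩ | ⟨he', -⟩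
      · exfalso
        have h1 : f' 0 ∈ suppS Q'.1.1 := hr' ▸ Set.mem_range_self 0
        obtain ⟨y, hy, hyne⟩ := supp_no_singleton h1
        obtain ⟨a, rfl⟩ : y ∈ Set.range f' := hr'.symm ▸ hy
        apply hyne
        have ha : a = 0 := Fin.ext (by have := a.isLt; simp; omega)
        rw [ha]
      · exact he'
    refine ⟨[], Equiv.refl ℕ, ?_⟩
    intro a b
    show Q'.1.1 a b = Q.1.1 a b
    rw [eq_zero_of_supp_empty hs' a b, eq_zero_of_supp_empty hs a b]
  · rcases h with ⟨f, hf, hr, hv⟩ | ⟨he, -⟩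
    swap
    · exact absurd he hs
    rcases h' with ⟨f', hf', hr', hv'⟩ | ⟨he', h0'⟩
    swap
    · exfalso
      have hdim : P.1.1 = 0 := by rw [absEquiv_dim hrel]; exact h0'
      have h1 : f 0 ∈ suppS Q.1.1 := hr ▸ Set.mem_range_self 0
      obtain ⟨y, hy, hyne⟩ := supp_no_singleton h1
      obtain ⟨a, rfl⟩ : y ∈ Set.range f := hr.symm ▸ hy
      apply hyne
      have ha : a = 0 := Fin.ext (by have := a.isLt; simp; omega)
      rw [ha]
    obtain ⟨l₀, g, hg, hPg⟩ := hrel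
    have hc1 : AF.comap f (mutList Q.1 (l₀.map f)) = mutList (AF.comap f Q.1) l₀ :=
      mutList_comap hf l₀ Q.1
    have hcP : AF.comap f Q.1 = P.1.2 := AF.ext2 hv
    rw [hcP] at hc1
    have hc2 : ∀ a b, (mutList Q.1 (l₀.map f)).1 (f a) (f b) = Q'.1.1 (f' (g a)) (f' (g b)) := by
      intro a b
      have e1 : (mutList Q.1 (l₀.map f)).1 (f a) (f b) = (mutList P.1.2 l₀).1 a b := by
        show (AF.comap f (mutList Q.1 (l₀.map f))).1 a b = _
        rw [hc1]
      rw [e1, ← hPg a b, hv' (g a) (g b)]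
    have hsuppQ1 : suppS (mutList Q.1 (l₀.map f)).1 = suppS Q.1.1 := supp_mutList Q.1 _
    let σ : ℕ → ℕ := fun x => if hx : x ∈ Set.range f
      then f' (g ((Equiv.ofInjective f hf).symm ⟨x, hx⟩)) else x
    have hσval : ∀ a : Fin (P.1.1+1), σ (f a) = f' (g a) := by
      intro a
      have hfa : f a ∈ Set.range f := Set.mem_range_self a
      simp only [σ, dif_pos hfa]
      congr 2
      exact Equiv.ofInjective_symm_apply hf a
    have hbij : Set.BijOn σ (suppS Q.1.1) (suppS Q'.1.1) := by
      refine ⟨?_, ?_, ?_⟩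
      · intro x hx
        obtain ⟨a, rfl⟩ : x ∈ Set.range f := hr.symm ▸ hx
        rw [hσval a]
        exact hr' ▸ Set.mem_range_self (g a)
      · intro x hx y hy hxy
        obtain ⟨a, rfl⟩ : x ∈ Set.range f := hr.symm ▸ hx
        obtain ⟨b, rfl⟩ : y ∈ Set.range f := hr.symm ▸ hy
        rw [hσval a, hσval b] at hxy
        exact congrArg f (hg.1 (hf' hxy))
      · intro y hy
        obtain ⟨b, rfl⟩ : y ∈ Set.range f' := hr'.symm ▸ hy
        obtain ⟨a, ha⟩ := hg.2 b
        exact ⟨f a, hr ▸ Set.mem_range_self a, by rw [hσval a, ha]⟩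
    obtain ⟨e, he1, he2⟩ := exists_extension Q.2 Q'.2 σ hbij
    refine ⟨l₀.map f, e, ?_⟩
    intro x y
    by_cases hx : x ∈ suppS Q.1.1
    · by_cases hy : y ∈ suppS Q.1.1
      · have hx' := hx
        have hy' := hy
        rw [← hr] at hx' hy'
        obtain ⟨a, rfl⟩ := hx'
        obtain ⟨b, rfl⟩ := hy'
        rw [he1 _ hx, he1 _ hy, hσval a, hσval b, ← hc2 a b]
      · have h1 : (mutList Q.1 (l₀.map f)).1 x y = 0 :=
          zero_right (hsuppQ1 ▸ hy) x
        have h2 : Q'.1.1 (e x) (e y) = 0 := zero_right (he2 y hy) (e x)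
        rw [h1, h2]
    · have h1 : (mutList Q.1 (l₀.map f)).1 x y = 0 := zero_left (hsuppQ1 ▸ hx) y
      have h2 : Q'.1.1 (e x) (e y) = 0 := zero_left (he2 x hx) (e y)
      rw [h1, h2]

end MutAux

namespace MutAux
open Function Set Topology

lemma spec_surj (P : GoodQ) : ∃ Q : FinT, spec Q P := by
  rcases P.2 with hni | h0
  · set n := P.1.1 with hn
    let Qf : ℕ → ℕ → ℤ := fun x y =>
      if h : x < n + 1 ∧ y < n + 1 then P.1.2.1 ⟨x, h.1⟩ ⟨y, h.2⟩ else 0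
    have hskew : ∀ a b, Qf a b = - Qf b a := by
      intro a b
      simp only [Qf]
      by_cases ha : a < n+1
      · by_cases hb : b < n+1
        · rw [dif_pos ⟨ha, hb⟩, dif_pos ⟨hb, ha⟩]; exact P.1.2.2 _ _
        · rw [dif_neg (by tauto), dif_neg (by tauto)]
          try ring
      · rw [dif_neg (by tauto), dif_neg (by tauto)]
        try ring
    have hsupp : suppS Qf = {x | x < n+1} := by
      ext x
      constructor
      · rintro ⟨y, hy⟩
        by_contra hx
        apply hy
        simp only [Qf]
        rw [dif_neg (by tauto)]
      · intro hx
        obtain ⟨b, hb⟩ := hni ⟨x, hx⟩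
        refine ⟨b.1, ?_⟩
        simp only [Qf]
        rw [dif_pos ⟨hx, b.isLt⟩]
        simpa using hb
    refine ⟨⟨⟨Qf, hskew⟩, ?_⟩, Or.inl ⟨Fin.val, Fin.val_injective, ?_, ?_⟩⟩
    · show (suppS Qf).Finite
      rw [hsupp]
      exact Set.finite_Iio _
    · show Set.range (Fin.val) = suppS Qf
      rw [hsupp]
      ext x
      constructor
      · rintro ⟨a, rfl⟩; exact a.isLt
      · intro hx; exact ⟨⟨x, hx⟩, rfl⟩
    · intro a b
      show Qf a.1 b.1 = P.1.2.1 a b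
      simp only [Qf]
      rw [dif_pos ⟨a.isLt, b.isLt⟩]
      try simp
  · refine ⟨⟨⟨fun _ _ => 0, fun _ _ => by ring⟩, ?_⟩, Or.inr ⟨?_, h0⟩⟩
    · show ({x : ℕ | ∃ y : ℕ, (0:ℤ) ≠ 0}).Finite
      simp
    · show {x : ℕ | ∃ y : ℕ, (0:ℤ) ≠ 0} = ∅
      simp

lemma mem_Uset_iff {Q Q' : AF ℕ} {V : Set ℕ} :
    Q' ∈ Uset Q V ↔ ∀ a ∈ V, ∀ b ∈ V, Q'.1 a b = Q.1 a b := by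
  constructor
  · intro h a ha b hb
    have h2 := congrFun (congrFun h a) b
    simpa [restrictFun, ha, hb] using h2
  · intro h
    show restrictFun V Q'.1 = restrictFun V Q.1
    funext a b
    simp only [restrictFun]
    split
    · rename_i hab; exact h a hab.1 b hab.2
    · rfl

lemma Uset_mono {Q : AF ℕ} {V W : Set ℕ} (h : V ⊆ W) : Uset Q W ⊆ Uset Q V := by
  intro Q' hQ'
  rw [mem_Uset_iff] at hQ' ⊢
  exact fun a ha b hb => hQ' a (h ha) b (h hb)

lemma exists_basic {T : Set (AF ℕ)} (hT : IsOpen[weakTop ℕ] T) {Q : AF ℕ} (hQ : Q ∈ T) :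
    ∃ V : Set ℕ, V.Finite ∧ Uset Q V ⊆ T := by
  have hT' : TopologicalSpace.GenerateOpen (UBasis ℕ) T := hT
  clear hT
  induction hT' with
  | basic U hU =>
    obtain ⟨Q₀, V, hV, rfl⟩ := hU
    refine ⟨V, hV, ?_⟩
    intro Q' hQ'
    rw [mem_Uset_iff] at hQ' ⊢
    intro a ha b hb
    rw [hQ' a ha b hb]
    exact (mem_Uset_iff.mp hQ) a ha b hb
  | univ => exact ⟨∅, Set.finite_empty, fun _ _ => trivial⟩
  | inter U₁ U₂ h1 h2 ih1 ih2 =>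
    obtain ⟨V₁, hV₁, hs₁⟩ := ih1 hQ.1
    obtain ⟨V₂, hV₂, hs₂⟩ := ih2 hQ.2
    exact ⟨V₁ ∪ V₂, hV₁.union hV₂, fun Q' hQ' =>
      ⟨hs₁ (Uset_mono Set.subset_union_left hQ'), hs₂ (Uset_mono Set.subset_union_right hQ')⟩⟩
  | sUnion S hS ih =>
    obtain ⟨U, hUS, hQU⟩ := hQ
    obtain ⟨V, hV, hsub⟩ := ih U hUS hQU
    exact ⟨V, hV, fun Q' hQ' => ⟨U, hUS, hsub hQ'⟩⟩

lemma preRel_of_agree {Q Q' : FinT} {P P' : GoodQ} (h : spec Q P) (h' : spec Q' P')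
    (hagree : ∀ a ∈ suppS Q.1.1, ∀ b ∈ suppS Q.1.1, Q'.1.1 a b = Q.1.1 a b) :
    preRel P P' := by
  refine ⟨P'.1, absEquiv_refl P'.1, ?_⟩
  rcases h with ⟨f, hf, hr, hv⟩ | ⟨-, h0⟩
  case inr =>
    refine ⟨fun _ => 0, fun a b _ => ?_, fun a b => ?_⟩
    · ext; have := a.isLt; have := b.isLt; omega
    · have hab : a = b := by ext; have := a.isLt; have := b.isLt; omega
      subst hab
      rw [AF.diag, AF.diag]
  case inl =>
    have hsub : suppS Q.1.1 ⊆ suppS Q'.1.1 := by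
      intro x hx
      obtain ⟨y, hy⟩ := hx
      have hy' : y ∈ suppS Q.1.1 := mem_supp_symm hy
      refine ⟨y, ?_⟩
      rw [hagree x ⟨y, hy⟩ y hy']
      exact hy
    rcases h' with ⟨f', hf', hr', hv'⟩ | ⟨he', -⟩
    swap
    · exfalso
      have hmem : f 0 ∈ suppS Q'.1.1 := hsub (hr ▸ Set.mem_range_self 0)
      rw [he'] at hmem
      exact Set.notMem_empty _ hmem
    have hmem : ∀ a : Fin (P.1.1+1), f a ∈ Set.range f' := by
      intro a
      rw [hr']
      exact hsub (hr ▸ Set.mem_range_self a)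
    let emb : Fin (P.1.1+1) → Fin (P'.1.1+1) :=
      fun a => (Equiv.ofInjective f' hf').symm ⟨f a, hmem a⟩
    have hembv : ∀ a, f' (emb a) = f a := fun a => Equiv.apply_ofInjective_symm hf' _
    refine ⟨emb, fun a b hab => hf (by rw [← hembv a, ← hembv b, hab]), ?_⟩
    intro a b
    rw [← hv' (emb a) (emb b), hembv a, hembv b,
      hagree (f a) (hr ▸ Set.mem_range_self a) (f b) (hr ▸ Set.mem_range_self b), hv a b]

noncomputable def chooseP (Q : FinT) : GoodQ := (spec_exists Q).choose

lemma chooseP_spec (Q : FinT) : spec Q (chooseP Q) := (spec_exists Q).choose_spec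

noncomputable def Phi : FinT → Msp := fun Q => Quot.mk relG (chooseP Q)

lemma Phi_respects : ∀ Q Q' : FinT, finRel Q Q' → Phi Q = Phi Q' := fun Q Q' h =>
  Quot.sound (spec_invariant h (chooseP_spec Q) (chooseP_spec Q'))

noncomputable def PhiBar : Quot finRel → Msp := Quot.lift Phi (Phi_respects)

lemma relG_of_mk_eq {P P' : GoodQ} (h : Quot.mk relG P = Quot.mk relG P') : relG P P' :=
  (relG_equivalence.eqvGen_iff).mp (Quot.eq.mp h)

lemma PhiBar_bij : Function.Bijective PhiBar := by
  constructor
  · intro q q' hqq'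
    obtain ⟨Q, rfl⟩ := Quot.exists_rep q
    obtain ⟨Q', rfl⟩ := Quot.exists_rep q'
    exact Quot.sound (finRel_of_relG (chooseP_spec Q) (chooseP_spec Q') (relG_of_mk_eq hqq'))
  · intro r
    obtain ⟨P, rfl⟩ := Quot.exists_rep r
    obtain ⟨Q, hQ⟩ := spec_surj P
    exact ⟨Quot.mk _ Q, Quot.sound (spec_unique (chooseP_spec Q) hQ)⟩

lemma isOpen_Msp_iff {O : Set Msp} :
    IsOpen O ↔ ∀ P R : GoodQ, preRel P R → Quot.mk relG P ∈ O → Quot.mk relG R ∈ O :=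
  Iff.rfl

lemma continuous_Phi : Continuous Phi := by
  rw [continuous_def]
  intro O hO
  have hO' := isOpen_Msp_iff.mp hO
  refine (show (∃ t, IsOpen[weakTop ℕ] t ∧ Subtype.val ⁻¹' t = Phi ⁻¹' O) → IsOpen (Phi ⁻¹' O)
    from fun h => h)
    ⟨⋃₀ {U | ∃ Q : FinT, Phi Q ∈ O ∧ U = Uset Q.1 (suppS Q.1.1)}, ?_, ?_⟩
  · apply TopologicalSpace.GenerateOpen.sUnion
    rintro U ⟨Q, hQ, rfl⟩
    exact TopologicalSpace.GenerateOpen.basic _ ⟨Q.1, suppS Q.1.1, Q.2, rfl⟩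
  · ext Q'
    simp only [Set.mem_preimage, Set.mem_sUnion]
    constructor
    · rintro ⟨U, ⟨Q, hQO, rfl⟩, hQ'U⟩
      have hag := mem_Uset_iff.mp hQ'U
      exact hO' _ _ (preRel_of_agree (chooseP_spec Q) (chooseP_spec Q') hag) hQO
    · intro hQ'
      exact ⟨Uset Q'.1 (suppS Q'.1.1), ⟨Q', hQ', rfl⟩, mem_Uset_iff.mpr (fun a _ b _ => rfl)⟩

end MutAux

namespace MutAux
open Function Set Topology

/-- Realize an abstract quiver with no isolated vertices on `ℕ` along an injection `j`. -/
lemma realize {k : ℕ} (S' : AF (Fin (k+1))) (hni : ∀ s, ∃ t, S'.1 s t ≠ 0)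
    (j : Fin (k+1) → ℕ) (hjinj : Injective j) :
    ∃ Q'' : FinT, spec Q'' ⟨⟨k, S'⟩, Or.inl hni⟩ ∧
      ∀ x y, Q''.1.1 x y =
        if x ∈ Set.range j ∧ y ∈ Set.range j
        then S'.1 (Function.invFun j x) (Function.invFun j y) else 0 := by
  classical
  set jinv := Function.invFun j with hjinvdef
  have hjinv : ∀ s, jinv (j s) = s := Function.leftInverse_invFun hjinj
  let Qf : ℕ → ℕ → ℤ := fun x y =>
    if x ∈ Set.range j ∧ y ∈ Set.range j then S'.1 (jinv x) (jinv y) else 0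
  have hskew : ∀ x y, Qf x y = - Qf y x := by
    intro x y
    simp only [Qf]
    by_cases hxy : x ∈ Set.range j ∧ y ∈ Set.range j
    · rw [if_pos hxy, if_pos ⟨hxy.2, hxy.1⟩]; exact S'.2 _ _
    · rw [if_neg hxy, if_neg (fun hc => hxy ⟨hc.2, hc.1⟩)]; ring
  have hvals : ∀ s t, Qf (j s) (j t) = S'.1 s t := by
    intro s t
    simp only [Qf]
    rw [if_pos ⟨Set.mem_range_self s, Set.mem_range_self t⟩, hjinv, hjinv]
  have hzero : ∀ x y, x ∉ Set.range j → Qf x y = 0 :=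
    fun x y hx => if_neg (fun hc => hx hc.1)
  have hsupp : suppS Qf = Set.range j := by
    ext x
    constructor
    · rintro ⟨y, hy⟩
      by_contra hx
      exact hy (hzero x y hx)
    · rintro ⟨s, rfl⟩
      obtain ⟨t, ht⟩ := hni s
      exact ⟨j t, by rw [hvals]; exact ht⟩
  refine ⟨⟨⟨Qf, hskew⟩, ?_⟩, Or.inl ⟨j, hjinj, ?_, fun a b => hvals a b⟩, fun x y => rfl⟩
  · show (suppS Qf).Finite
    rw [hsupp]
    exact Set.finite_range j
  · show Set.range j = suppS Qf
    rw [hsupp]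

lemma isOpen_image_PhiBar {O' : Set (Quot finRel)} (hO' : IsOpen O') :
    IsOpen (PhiBar '' O') := by
  classical
  rw [isOpen_Msp_iff]
  intro Pg Rg hpre hP
  obtain ⟨q, hqO, hq⟩ := hP
  obtain ⟨Q, rfl⟩ := Quot.exists_rep q
  have hQP : relG (chooseP Q) Pg := relG_of_mk_eq hq
  obtain ⟨S, hRS, hPS⟩ := hpre
  have hpre_open : IsOpen (Quot.mk finRel ⁻¹' O') := hO'
  obtain ⟨T, hTopen, hTeq⟩ :
      ∃ t, IsOpen[weakTop ℕ] t ∧ Subtype.val ⁻¹' t = Quot.mk finRel ⁻¹' O' := hpre_open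
  have hQT : Q.1 ∈ T := by
    have : Q ∈ Subtype.val ⁻¹' T := by rw [hTeq]; exact hqO
    exact this
  obtain ⟨V₀, hV₀, hV₀sub⟩ := exists_basic hTopen hQT
  set V := V₀ ∪ suppS Q.1.1 with hV
  have hVfin : V.Finite := hV₀.union Q.2
  have hkey : ∀ Q'' : FinT, (∀ a ∈ V, ∀ b ∈ V, Q''.1.1 a b = Q.1.1 a b) →
      Quot.mk finRel Q'' ∈ O' := by
    intro Q'' hagree
    have h1 : Q''.1 ∈ Uset Q.1 V := mem_Uset_iff.mpr hagree
    have h2 : Q''.1 ∈ T := hV₀sub (Uset_mono Set.subset_union_left h1)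
    have h3 : Q'' ∈ Subtype.val ⁻¹' T := h2
    rw [hTeq] at h3
    exact h3
  have hgoodS : GoodAbs S := good_of_absEquiv hRS Rg.2
  obtain ⟨emb, hembinj, hembval⟩ := hPS
  rcases hgoodS with hniS | hS0
  swap
  · -- S is the one-vertex quiver
    have hPgdim : Pg.1.1 = 0 := by
      have hcard := Fintype.card_le_of_injective emb hembinj
      simp only [Fintype.card_fin] at hcard
      omega
    have hQdim : (chooseP Q).1.1 = 0 := by rw [absEquiv_dim hQP]; exact hPgdim
    have hRdim : Rg.1.1 = 0 := by rw [absEquiv_dim hRS]; exact hS0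
    refine ⟨Quot.mk finRel Q, hqO, ?_⟩
    show Quot.mk relG (chooseP Q) = Quot.mk relG Rg
    exact Quot.sound (absEquiv_of_dim_zero hQdim hRdim)
  · -- S has no isolated vertices
    obtain ⟨l₀, h, hh, hPg⟩ := hQP
    set l' : List (Fin (Pg.1.1+1)) := l₀.reverse.map h with hl'
    set S' : AF (Fin (S.1+1)) := mutList S.2 (l'.map emb) with hS'
    have hC : AF.comap (emb ∘ h) S' = (chooseP Q).1.2 := by
      have c1 : AF.comap emb S' = mutList (AF.comap emb S.2) l' :=
        mutList_comap hembinj l' S.2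
      have c2 : AF.comap emb S.2 = Pg.1.2 := AF.ext2 hembval
      have c3 : AF.comap h Pg.1.2 = mutList (chooseP Q).1.2 l₀ := AF.ext2 hPg
      have c4 : AF.comap h (mutList Pg.1.2 (l₀.reverse.map h)) =
          mutList (AF.comap h Pg.1.2) l₀.reverse := mutList_comap hh.injective l₀.reverse Pg.1.2
      have c5 : AF.comap (emb ∘ h) S' = AF.comap h (AF.comap emb S') := rfl
      rw [c5, c1, c2]
      rw [hl', c4, c3, mutList_reverse]
    have hS'supp : ∀ s : Fin (S.1+1), ∃ t, S'.1 s t ≠ 0 := by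
      intro s
      have hmem : s ∈ suppS S'.1 := by
        rw [hS', supp_mutList]
        exact hniS s
      exact hmem
    set Shat : GoodQ := ⟨⟨S.1, S'⟩, Or.inl hS'supp⟩ with hShat
    have hShatR : relG Shat Rg := by
      have h1 : absEquiv S ⟨S.1, S'⟩ :=
        ⟨l'.map emb, id, Function.bijective_id, fun a b => rfl⟩
      exact absEquiv_trans (absEquiv_symm h1) (absEquiv_symm hRS)
    -- fresh points
    haveI : Infinite ↥(Vᶜ) := (hVfin.infinite_compl).to_subtype
    let w : Fin (S.1+1) → ℕ := fun s => ((Infinite.natEmbedding ↥(Vᶜ)) s.1 : ℕ)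
    have hwinj : Injective w := fun a b hab =>
      Fin.val_injective ((Infinite.natEmbedding ↥(Vᶜ)).injective (Subtype.ext hab))
    have hwV : ∀ s, w s ∉ V := fun s => ((Infinite.natEmbedding ↥(Vᶜ)) s.1).2
    rcases chooseP_spec Q with ⟨f, hfinj, hfr, hfv⟩ | ⟨hse, -⟩
    · -- main case : realize S' matching Q on its support
      set A : Fin ((chooseP Q).1.1+1) → Fin (S.1+1) := emb ∘ h with hA
      have hAinj : Injective A := hembinj.comp hh.injective
      set j : Fin (S.1+1) → ℕ := fun s =>
        if hs : s ∈ Set.range A then f ((Equiv.ofInjective A hAinj).symm ⟨s, hs⟩) else w s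
        with hj
      have hjA : ∀ a, j (A a) = f a := by
        intro a
        simp only [hj, dif_pos (Set.mem_range_self a)]
        congr 1
        exact Equiv.ofInjective_symm_apply hAinj a
      have hfV : ∀ a, f a ∈ V := fun a => Or.inr (hfr ▸ Set.mem_range_self a)
      have hjV : ∀ s, s ∉ Set.range A → j s ∉ V := by
        intro s hs
        rw [hj]
        simp only [dif_neg hs]
        exact hwV s
      have hjinj : Injective j := by
        intro s t hst
        by_cases hs : s ∈ Set.range A
        · by_cases ht : t ∈ Set.range A
          · obtain ⟨a, rfl⟩ := hs
            obtain ⟨b, rfl⟩ := ht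
            rw [hjA, hjA] at hst
            exact congrArg A (hfinj hst)
          · exfalso
            obtain ⟨a, rfl⟩ := hs
            rw [hjA] at hst
            exact hjV t ht (hst ▸ hfV a)
        · by_cases ht : t ∈ Set.range A
          · exfalso
            obtain ⟨b, rfl⟩ := ht
            rw [hjA] at hst
            exact hjV s hs (hst.symm ▸ hfV b)
          · have h1 : j s = w s := dif_neg hs
            have h2 : j t = w t := dif_neg ht
            rw [h1, h2] at hst
            exact hwinj hst
      obtain ⟨Q'', hspec'', hform⟩ := realize S' hS'supp j hjinj
      have hagree : ∀ a ∈ V, ∀ b ∈ V, Q''.1.1 a b = Q.1.1 a b := by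
        intro x hx y hy
        rw [hform x y]
        by_cases hxr : x ∈ Set.range j
        · by_cases hyr : y ∈ Set.range j
          · rw [if_pos ⟨hxr, hyr⟩]
            obtain ⟨s, rfl⟩ := hxr
            obtain ⟨t, rfl⟩ := hyr
            have hsA : s ∈ Set.range A := by
              by_contra hs
              exact hjV s hs hx
            have htA : t ∈ Set.range A := by
              by_contra hts
              exact hjV t hts hy
            obtain ⟨a, rfl⟩ := hsA
            obtain ⟨b, rfl⟩ := htA
            rw [Function.leftInverse_invFun hjinj, Function.leftInverse_invFun hjinj,
              hjA, hjA]
            show (AF.comap A S').1 a b = Q.1.1 (f a) (f b)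
            rw [hA, hC, ← hfv a b]
          · rw [if_neg (fun hc => hyr hc.2)]
            have hy' : y ∉ suppS Q.1.1 := by
              intro hc
              rw [← hfr] at hc
              obtain ⟨b, rfl⟩ := hc
              exact hyr ⟨A b, hjA b⟩
            exact (zero_right hy' x).symm
        · rw [if_neg (fun hc => hxr hc.1)]
          have hx' : x ∉ suppS Q.1.1 := by
            intro hc
            rw [← hfr] at hc
            obtain ⟨a, rfl⟩ := hc
            exact hxr ⟨A a, hjA a⟩
          exact (zero_left hx' y).symm
      refine ⟨Quot.mk finRel Q'', hkey Q'' hagree, ?_⟩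
      show Quot.mk relG (chooseP Q'') = Quot.mk relG Rg
      exact Quot.sound
        (relG_equivalence.trans (spec_unique (chooseP_spec Q'') hspec'') hShatR)
    · -- support of Q is empty : realize S' at entirely fresh points
      obtain ⟨Q'', hspec'', hform⟩ := realize S' hS'supp w hwinj
      have hagree : ∀ a ∈ V, ∀ b ∈ V, Q''.1.1 a b = Q.1.1 a b := by
        intro x hx y hy
        rw [hform x y, eq_zero_of_supp_empty hse x y]
        rw [if_neg]
        rintro ⟨⟨s, rfl⟩, -⟩
        exact hwV s hx
      refine ⟨Quot.mk finRel Q'', hkey Q'' hagree, ?_⟩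
      show Quot.mk relG (chooseP Q'') = Quot.mk relG Rg
      exact Quot.sound
        (relG_equivalence.trans (spec_unique (chooseP_spec Q'') hspec'') hShatR)

lemma continuous_PhiBar : Continuous PhiBar := by
  rw [continuous_def]
  intro O hO
  have h1 : IsOpen (Phi ⁻¹' O) := continuous_def.mp continuous_Phi O hO
  exact h1

end MutAux


open MutAux in
/-- `Fin/∼` is homeomorphic to `M'`, via the map sending the class of `Q` to the class of
the restriction of `Q` to its support when the support is nonempty, and to the class of
the one-vertex quiver when `Q` has no arrows. -/
theorem fin_quotient_homeomorphic_to_mutation_class_space :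
    ∃ H : Quot finRel ≃ₜ Msp,
      ∀ (Q : FinT) (P : GoodQ),
        ((∃ f : Fin (P.1.1 + 1) → ℕ, Function.Injective f ∧
            Set.range f = {x : ℕ | ∃ y, Q.1.1 x y ≠ 0} ∧
            ∀ a b, Q.1.1 (f a) (f b) = P.1.2.1 a b) ∨
          ({x : ℕ | ∃ y, Q.1.1 x y ≠ 0} = ∅ ∧ P.1.1 = 0)) →
        H (Quot.mk finRel Q) = Quot.mk relG P := by
  refine ⟨⟨Equiv.ofBijective PhiBar PhiBar_bij, continuous_PhiBar, ?_⟩, ?_⟩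
  · rw [continuous_def]
    intro O' hO'
    have himg : (Equiv.ofBijective PhiBar PhiBar_bij).invFun ⁻¹' O' = PhiBar '' O' := by
      rw [show (Equiv.ofBijective PhiBar PhiBar_bij).invFun
          = ⇑(Equiv.ofBijective PhiBar PhiBar_bij).symm from rfl, ← Equiv.image_eq_preimage_symm]
      rfl
    rw [himg]
    exact isOpen_image_PhiBar hO'
  · intro Q P hsp
    show PhiBar (Quot.mk finRel Q) = Quot.mk relG P
    exact Quot.sound (spec_unique (chooseP_spec Q) hsp)
end
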